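/- arXiv:2205.03131 — 8 statements merged into one kernel-verified Lean document; each statement's English description precedes it below -/
import Mathlib

section
/- Suppose that the excess loss r(W', Z') is σ-sub-Gaussian when (W', Z') has joint law P_W ⊗ μ. Then the expected generalization error satisfies E[ℰ(W, Sₙ)] ≤ (1/n) Σ_{i=1}^n √(2 σ² I(W; Zᵢ)). -/
open MeasureTheory ProbabilityTheory

/-- Real-valued Kullback–Leibler divergence `D(P‖Q) = ∫ log (dP/dQ) dP`. -/
noncomputable def klDivR {α : Type*} [MeasurableSpace α] (P Q : Measure α) : ℝ :=
  ∫ x, llr P Q x ∂P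

section Helpers

variable {α : Type*} [MeasurableSpace α] {P Q : Measure α}

lemma aux_klDivR_nonneg [IsProbabilityMeasure P] [IsProbabilityMeasure Q]
    (hPQ : P ≪ Q) (hint : Integrable (llr P Q) P) : 0 ≤ klDivR P Q := by
  have h1 : ∀ᵐ x ∂P, 0 < P.rnDeriv Q x := Measure.rnDeriv_pos hPQ
  have h2 : ∀ᵐ x ∂P, P.rnDeriv Q x < ⊤ := hPQ.ae_le (Measure.rnDeriv_lt_top P Q)
  have hmeas : Measurable fun x => ((P.rnDeriv Q x).toReal)⁻¹ :=
    (Measure.measurable_rnDeriv P Q).ennreal_toReal.inv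
  have hlint : ∫⁻ x, ENNReal.ofReal (((P.rnDeriv Q x).toReal)⁻¹) ∂P ≤ 1 := by
    rw [← MeasureTheory.lintegral_rnDeriv_mul hPQ (hmeas.ennreal_ofReal.aemeasurable)]
    calc ∫⁻ x, P.rnDeriv Q x * ENNReal.ofReal (((P.rnDeriv Q x).toReal)⁻¹) ∂Q
        ≤ ∫⁻ _, 1 ∂Q := by
          refine lintegral_mono fun x => ?_
          set a := P.rnDeriv Q x with ha
          rcases eq_or_ne a ⊤ with h | h
          · simp [h]
          rcases eq_or_ne a 0 with h0 | h0
          · simp [h0]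
          have hpos : 0 < a.toReal := ENNReal.toReal_pos h0 h
          rw [ENNReal.ofReal_inv_of_pos hpos, ENNReal.ofReal_toReal h,
            ENNReal.mul_inv_cancel h0 h]
      _ = 1 := by simp
  have hiint : Integrable (fun x => ((P.rnDeriv Q x).toReal)⁻¹) P := by
    refine ⟨hmeas.aestronglyMeasurable, ?_⟩
    rw [hasFiniteIntegral_iff_ofReal (ae_of_all _ fun x => by positivity)]
    exact lt_of_le_of_lt hlint ENNReal.one_lt_top
  have hle : (fun x => 1 - ((P.rnDeriv Q x).toReal)⁻¹) ≤ᵐ[P] llr P Q := by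
    filter_upwards [h1, h2] with x hx hx'
    have ht : 0 < (P.rnDeriv Q x).toReal := ENNReal.toReal_pos hx.ne' hx'.ne
    have h3 := Real.log_le_sub_one_of_pos (inv_pos.mpr ht)
    rw [Real.log_inv] at h3
    have : 1 - ((P.rnDeriv Q x).toReal)⁻¹ ≤ Real.log (P.rnDeriv Q x).toReal := by linarith
    simpa [llr] using this
  have h3 : ∫ x, (1 - ((P.rnDeriv Q x).toReal)⁻¹) ∂P ≤ klDivR P Q :=
    integral_mono_ae ((integrable_const 1).sub hiint) hint hle
  have h4 : ∫ x, ((P.rnDeriv Q x).toReal)⁻¹ ∂P ≤ 1 := by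
    rw [integral_eq_lintegral_of_nonneg_ae (ae_of_all _ fun x => by positivity)
      hmeas.aestronglyMeasurable]
    refine ENNReal.toReal_le_of_le_ofReal one_pos.le ?_
    simpa using hlint
  rw [integral_sub (integrable_const 1) hiint, integral_const] at h3
  simp only [probReal_univ, ENNReal.toReal_one, smul_eq_mul, one_mul] at h3
  linarith

lemma aux_dv_le [IsProbabilityMeasure P] [IsProbabilityMeasure Q]
    (hPQ : P ≪ Q) (hllr : Integrable (llr P Q) P) {f : α → ℝ}
    (hfP : Integrable f P) (hef : Integrable (fun x => Real.exp (f x)) Q) :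
    ∫ x, f x ∂P ≤ klDivR P Q + Real.log (∫ x, Real.exp (f x) ∂Q) := by
  haveI : NeZero Q := ⟨IsProbabilityMeasure.ne_zero Q⟩
  haveI hQ' : IsProbabilityMeasure (Q.tilted f) := isProbabilityMeasure_tilted hef
  have hPQ' : P ≪ Q.tilted f := hPQ.trans (absolutelyContinuous_tilted hef)
  have h_int : Integrable (llr P (Q.tilted f)) P :=
    integrable_llr_tilted_right hPQ hfP hllr hef
  have h0 : 0 ≤ klDivR P (Q.tilted f) := aux_klDivR_nonneg hPQ' h_int
  have heq := integral_llr_tilted_right hPQ hfP hef hllr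
  unfold klDivR at *
  rw [heq] at h0
  linarith

lemma aux_integrable_of_exp [IsProbabilityMeasure P] [IsProbabilityMeasure Q]
    (hPQ : P ≪ Q) (hllr : Integrable (llr P Q) P) {f : α → ℝ} (hf : Measurable f)
    (he1 : Integrable (fun x => Real.exp (f x)) Q)
    (he2 : Integrable (fun x => Real.exp (- f x)) Q) :
    Integrable f P := by
  have key : ∀ a b : ℝ, 0 ≤ a → a * b ≤ a * Real.log a + Real.exp b := by
    intro a b ha
    rcases ha.eq_or_lt with h | h
    · rw [← h]; simp; positivity
    · have h1 := Real.add_one_le_exp (b - Real.log a)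
      rw [Real.exp_sub, Real.exp_log h] at h1
      have h2 : a * (b - Real.log a + 1) ≤ Real.exp b := by
        rw [← le_div_iff₀' h]; linarith
      nlinarith
  rw [← integrable_rnDeriv_smul_iff hPQ]
  have hd : Integrable (fun x => (P.rnDeriv Q x).toReal • llr P Q x) Q :=
    (integrable_rnDeriv_smul_iff hPQ).mpr hllr
  refine Integrable.mono' (hd.add (he1.add he2)) ?_ (ae_of_all _ fun x => ?_)
  · exact ((Measure.measurable_rnDeriv P Q).ennreal_toReal.smul hf).aestronglyMeasurable
  · set a := (P.rnDeriv Q x).toReal with hadef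
    have ha : 0 ≤ a := ENNReal.toReal_nonneg
    have hb : a * |f x| ≤ a * Real.log a + Real.exp |f x| := key a |f x| ha
    have hexp : Real.exp |f x| ≤ Real.exp (f x) + Real.exp (- f x) := by
      rcases abs_cases (f x) with ⟨h, _⟩ | ⟨h, _⟩ <;> rw [h] <;>
        [linarith [Real.exp_pos (- f x)]; linarith [Real.exp_pos (f x)]]
    have : ‖a • f x‖ = a * |f x| := by
      rw [smul_eq_mul, Real.norm_eq_abs, abs_mul, abs_of_nonneg ha]
    rw [this]
    have hllr_eq : llr P Q x = Real.log a := rfl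
    simp only [Pi.add_apply, smul_eq_mul, hllr_eq]
    linarith

end Helpers

/-- **Theorem 2 (sub-Gaussian excess loss, generalization error bound).**
If the excess loss `r(W', Z')` is `σ`-sub-Gaussian under the product law `P_W ⊗ μ`, then
`E[ℰ(W, Sₙ)] ≤ (1/n) ∑ᵢ √(2σ² I(W; Zᵢ))`. -/
theorem subGaussian_generalization_bound
    {Ω 𝒲 𝒵 : Type*} [MeasurableSpace Ω] [MeasurableSpace 𝒲] [MeasurableSpace 𝒵]
    (P : Measure Ω) [IsProbabilityMeasure P]
    (μ : Measure 𝒵) [IsProbabilityMeasure μ]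
    (ℓ : 𝒲 → 𝒵 → ℝ) (hℓ : Measurable (Function.uncurry ℓ))
    (n : ℕ) (hn : 0 < n)
    (Z : Fin n → Ω → 𝒵) (hZmeas : ∀ i, Measurable (Z i))
    (hZlaw : ∀ i, P.map (Z i) = μ)
    (hindep : iIndepFun Z P)
    (W : Ω → 𝒲) (hW : Measurable W)
    (wstar : 𝒲) (hwstar : ∀ w, ∫ z, ℓ wstar z ∂μ ≤ ∫ z, ℓ w z ∂μ)
    (r : 𝒲 → 𝒵 → ℝ) (hr : r = fun w z => ℓ w z - ℓ wstar z)
    (σ : ℝ) (hσ : 0 ≤ σ)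
    -- the excess loss is integrable and `σ`-sub-Gaussian under `P_W ⊗ μ`
    (hrInt : Integrable (fun p : 𝒲 × 𝒵 => r p.1 p.2) ((P.map W).prod μ))
    (hMGF : ∀ η : ℝ, Integrable
      (fun p : 𝒲 × 𝒵 => Real.exp (η * (r p.1 p.2 - ∫ q, r q.1 q.2 ∂((P.map W).prod μ))))
      ((P.map W).prod μ))
    (hsubG : ∀ η : ℝ,
      Real.log (∫ p, Real.exp (η * (r p.1 p.2 - ∫ q, r q.1 q.2 ∂((P.map W).prod μ)))
          ∂((P.map W).prod μ)) ≤ σ ^ 2 * η ^ 2 / 2)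
    -- all expectations appearing are finite
    (hgenInt : Integrable
      (fun ω => (∫ z, ℓ (W ω) z ∂μ) - (n : ℝ)⁻¹ * ∑ i, ℓ (W ω) (Z i ω)) P)
    (hac : ∀ i, P.map (fun ω => (W ω, Z i ω)) ≪ (P.map W).prod μ)
    (hllr : ∀ i, Integrable (llr (P.map (fun ω => (W ω, Z i ω))) ((P.map W).prod μ))
        (P.map (fun ω => (W ω, Z i ω)))) :
    ∫ ω, ((∫ z, ℓ (W ω) z ∂μ) - (n : ℝ)⁻¹ * ∑ i, ℓ (W ω) (Z i ω)) ∂P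
      ≤ (n : ℝ)⁻¹ * ∑ i, Real.sqrt (2 * σ ^ 2 *
          klDivR (P.map (fun ω => (W ω, Z i ω))) ((P.map W).prod μ)) := by
  have hWae : AEMeasurable W P := hW.aemeasurable
  haveI : IsProbabilityMeasure (P.map W) := Measure.isProbabilityMeasure_map hWae
  have hT : ∀ i : Fin n, Measurable fun ω => (W ω, Z i ω) := fun i => hW.prodMk (hZmeas i)
  haveI hPi : ∀ i : Fin n, IsProbabilityMeasure (P.map fun ω => (W ω, Z i ω)) :=
    fun i => Measure.isProbabilityMeasure_map (hT i).aemeasurable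
  have hrwz : ∀ w z, r w z = ℓ w z - ℓ wstar z := fun w z => by rw [hr]
  have hRmeas : Measurable fun p : 𝒲 × 𝒵 => r p.1 p.2 := by
    rw [hr]
    exact hℓ.sub (hℓ.comp (measurable_const.prodMk measurable_snd))
  have hhmeas : Measurable fun z => ℓ wstar z :=
    hℓ.comp (measurable_const.prodMk measurable_id)
  set Q : Measure (𝒲 × 𝒵) := (P.map W).prod μ with hQdef
  set m : ℝ := ∫ q, r q.1 q.2 ∂Q with hmdef
  -- integrability of r under each joint law
  have hRint : ∀ i, Integrable (fun p : 𝒲 × 𝒵 => r p.1 p.2)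
      (P.map fun ω => (W ω, Z i ω)) := by
    intro i
    have h1 : Integrable (fun p : 𝒲 × 𝒵 => r p.1 p.2 - m) (P.map fun ω => (W ω, Z i ω)) := by
      refine aux_integrable_of_exp (hac i) (hllr i) (hRmeas.sub measurable_const) ?_ ?_
      · simpa using hMGF 1
      · simpa [neg_mul, neg_sub] using hMGF (-1)
    exact (h1.add (integrable_const m)).congr (ae_of_all _ fun p => by simp)
  have hrWZint : ∀ i, Integrable (fun ω => r (W ω) (Z i ω)) P := fun i =>
    (integrable_map_measure hRmeas.aestronglyMeasurable (hT i).aemeasurable).mp (hRint i)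
  have hrWZeq : ∀ i, ∫ ω, r (W ω) (Z i ω) ∂P
      = ∫ p, r p.1 p.2 ∂(P.map fun ω => (W ω, Z i ω)) := fun i =>
    (integral_map (hT i).aemeasurable hRmeas.aestronglyMeasurable).symm
  -- the key per-index inequality
  have hDelta : ∀ i : Fin n, m - (∫ p, r p.1 p.2 ∂(P.map fun ω => (W ω, Z i ω)))
      ≤ Real.sqrt (2 * σ ^ 2 * klDivR (P.map fun ω => (W ω, Z i ω)) Q) := by
    intro i
    set K : ℝ := klDivR (P.map fun ω => (W ω, Z i ω)) Q with hKdef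
    set Δ : ℝ := m - ∫ p, r p.1 p.2 ∂(P.map fun ω => (W ω, Z i ω)) with hΔdef
    have hK0 : 0 ≤ K := aux_klDivR_nonneg (hac i) (hllr i)
    have key : ∀ η : ℝ, η * Δ ≤ K + σ ^ 2 * η ^ 2 / 2 := by
      intro η
      have hdv := aux_dv_le (hac i) (hllr i)
        (f := fun p : 𝒲 × 𝒵 => (-η) * (r p.1 p.2 - m))
        (((hRint i).sub (integrable_const m)).const_mul (-η)) (hMGF (-η))
      have hInt : ∫ p, (-η) * (r p.1 p.2 - m) ∂(P.map fun ω => (W ω, Z i ω)) = η * Δ := by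
        rw [integral_const_mul, integral_sub (hRint i) (integrable_const m), integral_const]
        simp only [probReal_univ, ENNReal.toReal_one, smul_eq_mul, one_mul]
        rw [hΔdef]; ring
      rw [hInt] at hdv
      have hlog := hsubG (-η)
      rw [neg_sq] at hlog
      calc η * Δ ≤ K + Real.log (∫ p, Real.exp ((-η) * (r p.1 p.2 - m)) ∂Q) := hdv
        _ ≤ K + σ ^ 2 * η ^ 2 / 2 := by
            refine (add_le_add_iff_left K).mpr ?_
            simpa using hlog
    rcases le_or_gt Δ 0 with h | h
    · exact h.trans (Real.sqrt_nonneg _)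
    rcases hσ.eq_or_lt with hσ0 | hσpos
    · exfalso
      have hk := key ((K + 1) / Δ)
      rw [← hσ0] at hk
      rw [div_mul_cancel₀ _ h.ne'] at hk
      simp at hk
      linarith
    · have hσ2 : (0:ℝ) < σ ^ 2 := by positivity
      have h2 := key (Δ / σ ^ 2)
      have h4 : Δ / σ ^ 2 * σ ^ 2 = Δ := div_mul_cancel₀ _ hσ2.ne'
      have hΔ2 : Δ ^ 2 ≤ 2 * σ ^ 2 * K := by nlinarith [h2, h4, hσ2, sq_nonneg (Δ / σ ^ 2)]
      calc Δ = Real.sqrt (Δ ^ 2) := (Real.sqrt_sq h.le).symm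
        _ ≤ Real.sqrt (2 * σ ^ 2 * K) := Real.sqrt_le_sqrt hΔ2
  have hnne : (n : ℝ) ≠ 0 := Nat.cast_ne_zero.mpr hn.ne'
  by_cases hhint : Integrable (fun z => ℓ wstar z) μ
  · have hrSM : StronglyMeasurable fun p : 𝒲 × 𝒵 => r p.1 p.2 := hRmeas.stronglyMeasurable
    set φ : 𝒲 → ℝ := fun w => ∫ z, r w z ∂μ with hφdef
    have hφSM : StronglyMeasurable φ := hrSM.integral_prod_right'
    have hφint : Integrable φ (P.map W) := hrInt.integral_prod_left
    have hm : ∫ w, φ w ∂(P.map W) = m := (integral_prod _ hrInt).symm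
    set c : ℝ := ∫ z, ℓ wstar z ∂μ with hcdef
    have haeW : ∀ᵐ w ∂(P.map W), (∫ z, ℓ w z ∂μ) = φ w + c := by
      filter_upwards [hrInt.prod_right_ae] with w hw
      have he : (fun z => ℓ w z) = fun z => r w z + ℓ wstar z := by
        funext z; rw [hrwz]; ring
      rw [he, integral_add hw hhint]
    have haeP : ∀ᵐ ω ∂P, (∫ z, ℓ (W ω) z ∂μ) = φ (W ω) + c := ae_of_ae_map hWae haeW
    have hφWint : Integrable (fun ω => φ (W ω)) P :=
      (integrable_map_measure hφSM.aestronglyMeasurable hWae).mp hφint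
    have hhZint : ∀ i, Integrable (fun ω => ℓ wstar (Z i ω)) P := by
      intro i
      have h1 : Integrable (fun z => ℓ wstar z) (P.map (Z i)) := by rw [hZlaw i]; exact hhint
      exact (integrable_map_measure hhmeas.aestronglyMeasurable (hZmeas i).aemeasurable).mp h1
    have hcongr : (fun ω => (∫ z, ℓ (W ω) z ∂μ) - (n : ℝ)⁻¹ * ∑ i, ℓ (W ω) (Z i ω))
        =ᵐ[P] fun ω => (φ (W ω) + c)
          - (n : ℝ)⁻¹ * ∑ i, (r (W ω) (Z i ω) + ℓ wstar (Z i ω)) := by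
      filter_upwards [haeP] with ω hω
      rw [hω]
      congr 1
      congr 1
      refine Finset.sum_congr rfl fun i _ => ?_
      rw [hrwz]; ring
    rw [integral_congr_ae hcongr]
    have hint_i : ∀ i : Fin n, Integrable (fun ω => r (W ω) (Z i ω) + ℓ wstar (Z i ω)) P :=
      fun i => (hrWZint i).add (hhZint i)
    have hsumint : Integrable (fun ω => ∑ i, (r (W ω) (Z i ω) + ℓ wstar (Z i ω))) P :=
      integrable_finset_sum _ fun i _ => hint_i i
    have hI1 : Integrable (fun ω => φ (W ω) + c) P := hφWint.add (integrable_const c)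
    have hI2 : Integrable
        (fun ω => (n : ℝ)⁻¹ * ∑ i, (r (W ω) (Z i ω) + ℓ wstar (Z i ω))) P :=
      hsumint.const_mul _
    rw [integral_sub hI1 hI2, integral_add hφWint (integrable_const c), integral_const,
      integral_const_mul, integral_finset_sum _ fun i _ => hint_i i]
    simp only [probReal_univ, ENNReal.toReal_one, smul_eq_mul, one_mul]
    have hφW : ∫ ω, φ (W ω) ∂P = m := by
      rw [← integral_map hWae hφSM.aestronglyMeasurable]; exact hm
    have hterm : ∀ i : Fin n, ∫ ω, (r (W ω) (Z i ω) + ℓ wstar (Z i ω)) ∂P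
        = (∫ p, r p.1 p.2 ∂(P.map fun ω => (W ω, Z i ω))) + c := by
      intro i
      rw [integral_add (hrWZint i) (hhZint i), hrWZeq i]
      congr 1
      rw [hcdef, ← hZlaw i]
      exact (integral_map (hZmeas i).aemeasurable hhmeas.aestronglyMeasurable).symm
    have hsum_eq : ∑ i : Fin n, ∫ ω, (r (W ω) (Z i ω) + ℓ wstar (Z i ω)) ∂P
        = (∑ i : Fin n, ∫ p, r p.1 p.2 ∂(P.map fun ω => (W ω, Z i ω))) + n * c := by
      rw [Finset.sum_congr rfl fun i _ => hterm i, Finset.sum_add_distrib,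
        Finset.sum_const, Finset.card_univ, Fintype.card_fin, nsmul_eq_mul]
    have hsum2 : ∑ i : Fin n, (m - ∫ p, r p.1 p.2 ∂(P.map fun ω => (W ω, Z i ω)))
        = n * m - ∑ i : Fin n, ∫ p, r p.1 p.2 ∂(P.map fun ω => (W ω, Z i ω)) := by
      rw [Finset.sum_sub_distrib, Finset.sum_const, Finset.card_univ, Fintype.card_fin,
        nsmul_eq_mul]
    have hle := Finset.sum_le_sum fun (i : Fin n) (_ : i ∈ Finset.univ) => hDelta i
    rw [hsum2] at hle
    have hmul := mul_le_mul_of_nonneg_left hle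
      (inv_nonneg.mpr (Nat.cast_nonneg n) : (0:ℝ) ≤ (n : ℝ)⁻¹)
    rw [hφW, hsum_eq]
    have hid : m + c - (n : ℝ)⁻¹ * ((∑ i : Fin n, ∫ p, r p.1 p.2
          ∂(P.map fun ω => (W ω, Z i ω))) + n * c)
        = (n : ℝ)⁻¹ * ((n : ℝ) * m - ∑ i : Fin n, ∫ p, r p.1 p.2
          ∂(P.map fun ω => (W ω, Z i ω))) := by
      field_simp
      ring
    rw [hid]
    exact hmul
  · exfalso
    have haeW : ∀ᵐ w ∂(P.map W), (∫ z, ℓ w z ∂μ) = 0 := by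
      filter_upwards [hrInt.prod_right_ae] with w hw
      refine integral_undef fun hc => hhint ?_
      have he : (fun z => ℓ wstar z) = fun z => ℓ w z - r w z := by
        funext z; rw [hrwz]; ring
      rw [he]
      exact hc.sub hw
    have haeP : ∀ᵐ ω ∂P, (∫ z, ℓ (W ω) z ∂μ) = 0 := ae_of_ae_map hWae haeW
    have hsumℓ : Integrable (fun ω => ∑ i, ℓ (W ω) (Z i ω)) P := by
      have h1 := hgenInt.const_mul (-(n : ℝ))
      refine h1.congr ?_
      filter_upwards [haeP] with ω hω
      rw [hω]
      field_simp
      ring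
    have hsumh : Integrable (fun ω => ∑ i, ℓ wstar (Z i ω)) P := by
      have hrs : Integrable (fun ω => ∑ i : Fin n, r (W ω) (Z i ω)) P :=
        integrable_finset_sum _ fun i _ => hrWZint i
      have h2 := hsumℓ.sub hrs
      refine h2.congr (ae_of_all _ fun ω => ?_)
      show (∑ i : Fin n, ℓ (W ω) (Z i ω)) - (∑ i : Fin n, r (W ω) (Z i ω))
        = ∑ i : Fin n, ℓ wstar (Z i ω)
      rw [← Finset.sum_sub_distrib]
      refine Finset.sum_congr rfl fun i _ => ?_
      rw [hrwz]; ring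
    set i0 : Fin n := ⟨0, hn⟩ with hi0
    set X : Ω → ℝ := fun ω => ℓ wstar (Z i0 ω) with hX
    set Y : Ω → ℝ := fun ω => ∑ i ∈ Finset.univ.erase i0, ℓ wstar (Z i ω) with hY
    have hXmeas : Measurable X := hhmeas.comp (hZmeas i0)
    have hYmeas : Measurable Y := Finset.measurable_sum _ fun i _ => hhmeas.comp (hZmeas i)
    have hindep' : iIndepFun
        (fun i ω => ℓ wstar (Z i ω)) P :=
      hindep.comp (fun _ z => ℓ wstar z) fun _ => hhmeas
    have hXY : IndepFun Y X P := by
      have h3 := hindep'.indepFun_finsetSum_of_notMem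
        (fun i => hhmeas.comp (hZmeas i)) (Finset.notMem_erase i0 Finset.univ)
      have h4 : (∑ j ∈ Finset.univ.erase i0, fun ω => ℓ wstar (Z j ω)) = Y := by
        funext ω
        rw [Finset.sum_apply]
      rwa [h4] at h3
    have hYXint : Integrable (fun ω => Y ω + X ω) P := by
      refine hsumh.congr (ae_of_all _ fun ω => ?_)
      show (∑ i : Fin n, ℓ wstar (Z i ω)) = Y ω + X ω
      rw [← Finset.add_sum_erase Finset.univ (fun i => ℓ wstar (Z i ω)) (Finset.mem_univ i0)]
      exact add_comm _ _
    have hmap : P.map (fun ω => (Y ω, X ω)) = (P.map Y).prod (P.map X) :=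
      (indepFun_iff_map_prod_eq_prod_map_map hYmeas.aemeasurable hXmeas.aemeasurable).mp hXY
    haveI : IsProbabilityMeasure (P.map X) := Measure.isProbabilityMeasure_map hXmeas.aemeasurable
    haveI : IsProbabilityMeasure (P.map Y) := Measure.isProbabilityMeasure_map hYmeas.aemeasurable
    have hplus : Integrable (fun q : ℝ × ℝ => q.1 + q.2) ((P.map Y).prod (P.map X)) := by
      rw [← hmap]
      exact (integrable_map_measure
        (measurable_fst.add measurable_snd).aestronglyMeasurable
        (hYmeas.prodMk hXmeas).aemeasurable).mpr hYXint
    have hae2 : ∀ᵐ y ∂(P.map Y), Integrable (fun x => y + x) (P.map X) := hplus.prod_right_ae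
    haveI : (ae (P.map Y)).NeBot := ae_neBot.mpr (IsProbabilityMeasure.ne_zero _)
    obtain ⟨y, hy⟩ := hae2.exists
    have hid : Integrable (fun x : ℝ => x) (P.map X) := by
      have h5 := hy.sub (integrable_const y)
      exact h5.congr (ae_of_all _ fun x => by simp)
    have hXint : Integrable X P :=
      (integrable_map_measure aestronglyMeasurable_id hXmeas.aemeasurable).mp hid
    apply hhint
    have h6 : Integrable (fun z => ℓ wstar z) (P.map (Z i0)) :=
      (integrable_map_measure hhmeas.aestronglyMeasurable (hZmeas i0).aemeasurable).mpr hXint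
    rwa [hZlaw i0] at h6
end

section
/- Suppose that the excess loss r(W', Z') is σ-sub-Gaussian when (W', Z') has joint law P_W ⊗ μ, and let ρ := E_{P_W ⊗ μ}[r(W', Z')] > 0. Then for every η with 0 < η < 2ρ/σ², setting a_η := 1 − ησ²/(2ρ) (so 0 < a_η < 1), the expected generalization error satisfies E[ℰ(W, Sₙ)] ≤ ((1 − a_η)/a_η) · E[ℛ̂(W, Sₙ)] + (1/(n η a_η)) Σ_{i=1}^n I(W; Zᵢ). -/
open MeasureTheory ProbabilityTheory

section Aux

variable {α : Type*} [MeasurableSpace α] {ν Q : Measure α}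

lemma aux_integrable_exp_abs {g : α → ℝ} (hgm : Measurable g)
    (h1 : Integrable (fun x => Real.exp (g x)) Q)
    (h2 : Integrable (fun x => Real.exp (-g x)) Q) :
    Integrable (fun x => Real.exp |g x|) Q := by
  refine (h1.add h2).mono hgm.abs.exp.aestronglyMeasurable ?_
  filter_upwards with x
  simp only [Pi.add_apply, Real.norm_eq_abs]
  have hb : Real.exp |g x| ≤ Real.exp (g x) + Real.exp (-g x) := by
    rcases abs_choice (g x) with h | h <;> rw [h] <;>
      nlinarith [Real.exp_pos (g x), Real.exp_pos (-g x)]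
  calc abs (Real.exp (abs (g x))) = Real.exp |g x| := abs_of_pos (Real.exp_pos _)
    _ ≤ Real.exp (g x) + Real.exp (-g x) := hb
    _ ≤ |Real.exp (g x) + Real.exp (-g x)| := le_abs_self _

lemma aux_integrable_of_llr [IsProbabilityMeasure ν] [IsProbabilityMeasure Q]
    (hνπ : ν ≪ Q) (hllr : Integrable (llr ν Q) ν) {g : α → ℝ} (hgm : Measurable g)
    (h1 : Integrable (fun x => Real.exp (g x)) Q)
    (h2 : Integrable (fun x => Real.exp (-g x)) Q) :
    Integrable g ν := by
  have habs := aux_integrable_exp_abs hgm h1 h2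
  have hkey : Integrable (fun x => Real.exp (|g x| - llr ν Q x)) ν := by
    constructor
    · exact (hgm.abs.sub (measurable_llr ν Q)).exp.aestronglyMeasurable
    · rw [hasFiniteIntegral_iff_ofReal (Filter.Eventually.of_forall fun x => (Real.exp_pos _).le)]
      calc ∫⁻ x, ENNReal.ofReal (Real.exp (|g x| - llr ν Q x)) ∂ν
          ≤ ∫⁻ x, Q.rnDeriv ν x * ENNReal.ofReal (Real.exp |g x|) ∂ν := by
            refine lintegral_mono_ae ?_
            filter_upwards [exp_neg_llr hνπ] with x hx
            rw [Real.exp_sub]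
            have : Real.exp (-llr ν Q x) = (Q.rnDeriv ν x).toReal := hx
            rw [show Real.exp (|g x|) / Real.exp (llr ν Q x)
                  = Real.exp |g x| * Real.exp (-(llr ν Q x)) by
                rw [Real.exp_neg]; ring, this,
              ENNReal.ofReal_mul (Real.exp_pos _).le, mul_comm]
            exact mul_le_mul_left ENNReal.ofReal_toReal_le _
        _ = ∫⁻ x, ENNReal.ofReal (Real.exp |g x|) ∂(ν.withDensity (Q.rnDeriv ν)) := by
            rw [lintegral_withDensity_eq_lintegral_mul _ (Measure.measurable_rnDeriv Q ν)
              (hgm.abs.exp.ennreal_ofReal)]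
            rfl
        _ ≤ ∫⁻ x, ENNReal.ofReal (Real.exp |g x|) ∂Q :=
            lintegral_mono' (Measure.withDensity_rnDeriv_le Q ν) le_rfl
        _ < ⊤ := by
            rw [← hasFiniteIntegral_iff_ofReal
              (Filter.Eventually.of_forall fun x => (Real.exp_pos _).le)]
            exact habs.2
  refine (hllr.add hkey).mono' hgm.aestronglyMeasurable ?_
  filter_upwards with x
  simp only [Pi.add_apply, Real.norm_eq_abs]
  have h := Real.add_one_le_exp (|g x| - llr ν Q x)
  linarith

lemma aux_kl_nonneg [IsProbabilityMeasure ν] [IsProbabilityMeasure Q] (hνπ : ν ≪ Q)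
    (hllr : Integrable (llr ν Q) ν) : 0 ≤ ∫ x, llr ν Q x ∂ν := by
  have hexp : Integrable (fun x => Real.exp (-llr ν Q x)) ν :=
    (integrable_congr (exp_neg_llr hνπ)).mpr Measure.integrable_toReal_rnDeriv
  have hj : Real.exp (∫ x, -llr ν Q x ∂ν) ≤ ∫ x, Real.exp (-llr ν Q x) ∂ν := by
    refine convexOn_exp.map_integral_le Real.continuous_exp.continuousOn isClosed_univ
      (Filter.Eventually.of_forall fun x => trivial) hllr.neg ?_
    exact hexp
  have hle : ∫ x, Real.exp (-llr ν Q x) ∂ν ≤ 1 := by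
    rw [integral_congr_ae (exp_neg_llr hνπ), Measure.integral_toReal_rnDeriv']
    have : (0:ℝ) ≤ ((Q.singularPart ν) Set.univ).toReal := ENNReal.toReal_nonneg
    rw [probReal_univ, measureReal_def]
    linarith
  rw [integral_neg] at hj
  nlinarith [Real.add_one_le_exp (-∫ x, llr ν Q x ∂ν)]

lemma aux_dv [IsProbabilityMeasure ν] [IsProbabilityMeasure Q] (hνπ : ν ≪ Q)
    (hllr : Integrable (llr ν Q) ν) {g : α → ℝ} (hgν : Integrable g ν)
    (hexp : Integrable (fun x => Real.exp (g x)) Q) :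
    ∫ x, g x ∂ν ≤ ∫ x, llr ν Q x ∂ν + Real.log (∫ x, Real.exp (g x) ∂Q) := by
  have hprob : IsProbabilityMeasure (Q.tilted g) := isProbabilityMeasure_tilted hexp
  have hπξ : Q ≪ Q.tilted g := absolutelyContinuous_tilted hexp
  have hνξ : ν ≪ Q.tilted g := hνπ.trans hπξ
  have hint : Integrable (llr ν (Q.tilted g)) ν :=
    integrable_llr_tilted_right hνπ hgν hllr hexp
  have heq := integral_llr_tilted_right hνπ hgν hexp hllr
  have h0 := aux_kl_nonneg hνξ hint
  rw [heq] at h0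
  linarith

lemma aux_indep_integrable {Ω : Type*} [MeasurableSpace Ω] {P : Measure Ω}
    [IsProbabilityMeasure P] {X Y : Ω → ℝ} (hX : Measurable X) (hY : Measurable Y)
    (hindep : IndepFun Y X P) (hsum : Integrable (fun ω => Y ω + X ω) P) :
    Integrable X P := by
  have hmap : P.map (fun ω => (Y ω, X ω)) = (P.map Y).prod (P.map X) :=
    (indepFun_iff_map_prod_eq_prod_map_map hY.aemeasurable hX.aemeasurable).mp hindep
  haveI : IsProbabilityMeasure (P.map Y) := Measure.isProbabilityMeasure_map hY.aemeasurable
  haveI : IsProbabilityMeasure (P.map X) := Measure.isProbabilityMeasure_map hX.aemeasurable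
  have hint : Integrable (fun p : ℝ × ℝ => p.1 + p.2) ((P.map Y).prod (P.map X)) := by
    rw [← hmap]
    exact (integrable_map_measure (measurable_fst.add measurable_snd).aestronglyMeasurable
      (hY.aemeasurable.prodMk hX.aemeasurable)).mpr hsum
  have h2 := hint.prod_right_ae
  obtain ⟨y, hy⟩ := h2.exists
  have hid : Integrable (fun x : ℝ => x) (P.map X) :=
    (hy.sub (integrable_const y)).congr (Filter.Eventually.of_forall fun x => by simp)
  have := (integrable_map_measure stronglyMeasurable_id.aestronglyMeasurable
    hX.aemeasurable).mp hid
  simpa [Function.comp] using this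

end Aux

open MeasureTheory ProbabilityTheory

/-- **Theorem 3 (fast rate with sub-Gaussian condition, generalization error).** -/
theorem subGaussian_fast_rate_generalization_bound
    {Ω 𝒲 𝒵 : Type*} [MeasurableSpace Ω] [MeasurableSpace 𝒲] [MeasurableSpace 𝒵]
    (P : Measure Ω) [IsProbabilityMeasure P]
    (μ : Measure 𝒵) [IsProbabilityMeasure μ]
    (ℓ : 𝒲 → 𝒵 → ℝ) (hℓ : Measurable (Function.uncurry ℓ))
    (n : ℕ) (hn : 0 < n)
    (Z : Fin n → Ω → 𝒵) (hZmeas : ∀ i, Measurable (Z i))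
    (hZlaw : ∀ i, P.map (Z i) = μ)
    (hindep : iIndepFun Z P)
    (W : Ω → 𝒲) (hW : Measurable W)
    (wstar : 𝒲) (hwstar : ∀ w, ∫ z, ℓ wstar z ∂μ ≤ ∫ z, ℓ w z ∂μ)
    (r : 𝒲 → 𝒵 → ℝ) (hr : r = fun w z => ℓ w z - ℓ wstar z)
    (σ : ℝ) (hσ : 0 < σ)
    -- the expected excess risk under `P_W ⊗ μ` is positive
    (ρ : ℝ) (hρ : ρ = ∫ q, r q.1 q.2 ∂((P.map W).prod μ)) (hρpos : 0 < ρ)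
    -- the excess loss is integrable and `σ`-sub-Gaussian under `P_W ⊗ μ`
    (hrInt : Integrable (fun p : 𝒲 × 𝒵 => r p.1 p.2) ((P.map W).prod μ))
    (hMGF : ∀ η : ℝ, Integrable
      (fun p : 𝒲 × 𝒵 => Real.exp (η * (r p.1 p.2 - ρ))) ((P.map W).prod μ))
    (hsubG : ∀ η : ℝ,
      Real.log (∫ p, Real.exp (η * (r p.1 p.2 - ρ)) ∂((P.map W).prod μ)) ≤ σ ^ 2 * η ^ 2 / 2)
    -- all expectations appearing are finite
    (hgenInt : Integrable
      (fun ω => (∫ z, ℓ (W ω) z ∂μ) - (n : ℝ)⁻¹ * ∑ i, ℓ (W ω) (Z i ω)) P)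
    (hEmpInt : Integrable (fun ω => (n : ℝ)⁻¹ * ∑ i, r (W ω) (Z i ω)) P)
    (hac : ∀ i, P.map (fun ω => (W ω, Z i ω)) ≪ (P.map W).prod μ)
    (hllr : ∀ i, Integrable (llr (P.map (fun ω => (W ω, Z i ω))) ((P.map W).prod μ))
        (P.map (fun ω => (W ω, Z i ω)))) :
    ∀ η aη : ℝ, 0 < η → η < 2 * ρ / σ ^ 2 → aη = 1 - η * σ ^ 2 / (2 * ρ) →
    ∫ ω, ((∫ z, ℓ (W ω) z ∂μ) - (n : ℝ)⁻¹ * ∑ i, ℓ (W ω) (Z i ω)) ∂P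
      ≤ (1 - aη) / aη * (∫ ω, (n : ℝ)⁻¹ * ∑ i, r (W ω) (Z i ω) ∂P)
        + (1 / (n * η * aη)) * ∑ i,
            klDivR (P.map (fun ω => (W ω, Z i ω))) ((P.map W).prod μ) := by
  intro η aη hη hη2 haη
  haveI hPW : IsProbabilityMeasure (P.map W) := Measure.isProbabilityMeasure_map hW.aemeasurable
  have hc_meas : Measurable fun z : 𝒵 => ℓ wstar z :=
    hℓ.comp (measurable_const.prodMk measurable_id)
  have hrm : Measurable fun p : 𝒲 × 𝒵 => r p.1 p.2 := by
    rw [hr]; exact hℓ.sub (hℓ.comp (measurable_const.prodMk measurable_snd))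
  have hZam : ∀ i, AEMeasurable (fun ω => (W ω, Z i ω)) P :=
    fun i => (hW.prodMk (hZmeas i)).aemeasurable
  have hn' : (0:ℝ) < n := by exact_mod_cast hn
  have hn0 : (n:ℝ) ≠ 0 := hn'.ne'
  have hσ2 : (0:ℝ) < σ ^ 2 := by positivity
  have haηpos : 0 < aη := by
    rw [haη, sub_pos, div_lt_one (by linarith)]
    calc η * σ ^ 2 < (2 * ρ / σ ^ 2) * σ ^ 2 := mul_lt_mul_of_pos_right hη2 hσ2
      _ = 2 * ρ := by field_simp
  -- per-i integrability of the excess loss under the joint law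
  have hrInt_i : ∀ i : Fin n, Integrable (fun p : 𝒲 × 𝒵 => r p.1 p.2)
      (P.map fun ω => (W ω, Z i ω)) := by
    intro i
    haveI : IsProbabilityMeasure (P.map fun ω => (W ω, Z i ω)) :=
      Measure.isProbabilityMeasure_map (hZam i)
    have h := aux_integrable_of_llr (hac i) (hllr i)
      (g := fun p : 𝒲 × 𝒵 => r p.1 p.2 - ρ) (hrm.sub measurable_const)
      (by simpa using hMGF 1) (by simpa using hMGF (-1))
    exact (h.add (integrable_const ρ)).congr (Filter.Eventually.of_forall fun p => by
      simp only [Pi.add_apply]; ring)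
  have hriP : ∀ i : Fin n, Integrable (fun ω => r (W ω) (Z i ω)) P :=
    fun i => (integrable_map_measure hrm.aestronglyMeasurable (hZam i)).mp (hrInt_i i)
  have hEi : ∀ i : Fin n, ∫ p, r p.1 p.2 ∂(P.map fun ω => (W ω, Z i ω))
      = ∫ ω, r (W ω) (Z i ω) ∂P :=
    fun i => integral_map (hZam i) hrm.aestronglyMeasurable
  -- Donsker–Varadhan step, per sample
  have hDV : ∀ i : Fin n, η * ρ - σ ^ 2 * η ^ 2 / 2
      ≤ klDivR (P.map fun ω => (W ω, Z i ω)) ((P.map W).prod μ)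
        + η * ∫ ω, r (W ω) (Z i ω) ∂P := by
    intro i
    haveI : IsProbabilityMeasure (P.map fun ω => (W ω, Z i ω)) :=
      Measure.isProbabilityMeasure_map (hZam i)
    have hgν : Integrable (fun p : 𝒲 × 𝒵 => (-η) * (r p.1 p.2 - ρ))
        (P.map fun ω => (W ω, Z i ω)) := ((hrInt_i i).sub (integrable_const ρ)).const_mul (-η)
    have h : ∫ p, (-η) * (r p.1 p.2 - ρ) ∂(P.map fun ω => (W ω, Z i ω))
        ≤ (∫ x, llr (P.map fun ω => (W ω, Z i ω)) ((P.map W).prod μ) x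
            ∂(P.map fun ω => (W ω, Z i ω)))
          + Real.log (∫ p, Real.exp ((-η) * (r p.1 p.2 - ρ)) ∂((P.map W).prod μ)) :=
      aux_dv (hac i) (hllr i) hgν (hMGF (-η))
    have hintval : ∫ p, (-η) * (r p.1 p.2 - ρ) ∂(P.map fun ω => (W ω, Z i ω))
        = (-η) * ((∫ ω, r (W ω) (Z i ω) ∂P) - ρ) := by
      rw [integral_const_mul, integral_sub (hrInt_i i) (integrable_const ρ), integral_const,
        hEi i]
      simp
    have hlog' : Real.log (∫ p, Real.exp ((-η) * (r p.1 p.2 - ρ)) ∂((P.map W).prod μ))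
        ≤ σ ^ 2 * η ^ 2 / 2 := by
      calc Real.log (∫ p, Real.exp ((-η) * (r p.1 p.2 - ρ)) ∂((P.map W).prod μ))
          ≤ σ ^ 2 * (-η) ^ 2 / 2 := hsubG (-η)
        _ = σ ^ 2 * η ^ 2 / 2 := by ring
    have hkl : klDivR (P.map fun ω => (W ω, Z i ω)) ((P.map W).prod μ)
        = ∫ x, llr (P.map fun ω => (W ω, Z i ω)) ((P.map W).prod μ) x
            ∂(P.map fun ω => (W ω, Z i ω)) := rfl
    rw [hkl]
    rw [hintval] at h
    nlinarith [h, hlog']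
  -- `ℓ wstar` is integrable under `μ` (uses independence for the contradiction)
  have hcInt : Integrable (fun z => ℓ wstar z) μ := by
    by_cases hc : Integrable (fun z => ℓ wstar z) μ
    · exact hc
    exfalso
    have hbad : ∀ᵐ w ∂(P.map W), ¬ Integrable (fun z => ℓ w z) μ := by
      filter_upwards [hrInt.prod_right_ae] with w hw hcon
      refine hc ?_
      refine (hcon.sub hw).congr (Filter.Eventually.of_forall fun z => ?_)
      simp only [Pi.sub_apply, hr]; ring
    have hsmeas : MeasurableSet {w : 𝒲 | Integrable (fun z => ℓ w z) μ} :=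
      measurableSet_integrable (f := fun (w : 𝒲) (z : 𝒵) => ℓ w z) hℓ.stronglyMeasurable
    have hbadP : ∀ᵐ ω ∂P, ¬ Integrable (fun z => ℓ (W ω) z) μ :=
      (ae_map_iff hW.aemeasurable hsmeas.compl).mp hbad
    have hA0 : (fun ω => ∫ z, ℓ (W ω) z ∂μ) =ᵐ[P] fun _ => (0:ℝ) := by
      filter_upwards [hbadP] with ω hω
      exact integral_undef hω
    have hC1 : Integrable
        (fun ω => (∫ z, ℓ (W ω) z ∂μ) - (n:ℝ)⁻¹ * ∑ i, ℓ wstar (Z i ω)) P := by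
      refine (hgenInt.add hEmpInt).congr (Filter.Eventually.of_forall fun ω => ?_)
      simp only [Pi.add_apply, hr]
      rw [Finset.sum_sub_distrib]
      ring
    have hC2 : Integrable (fun ω => ∑ i, ℓ wstar (Z i ω)) P := by
      have h2 : Integrable (fun ω => (-(n:ℝ)) *
          ((∫ z, ℓ (W ω) z ∂μ) - (n:ℝ)⁻¹ * ∑ i, ℓ wstar (Z i ω))) P := hC1.const_mul _
      refine h2.congr ?_
      filter_upwards [hA0] with ω hω
      rw [hω]
      field_simp
      ring
    have hXmeas : ∀ i, Measurable (fun ω => ℓ wstar (Z i ω)) :=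
      fun i => hc_meas.comp (hZmeas i)
    have hXindep : iIndepFun
        (fun i ω => ℓ wstar (Z i ω)) P := hindep.comp (fun _ z => ℓ wstar z) (fun _ => hc_meas)
    set i0 : Fin n := ⟨0, hn⟩ with hi0
    have hind2 : IndepFun (∑ j ∈ Finset.univ.erase i0, fun ω => ℓ wstar (Z j ω))
        (fun ω => ℓ wstar (Z i0 ω)) P :=
      hXindep.indepFun_finsetSum_of_notMem hXmeas (Finset.notMem_erase i0 _)
    have hind3 : IndepFun (fun ω => ∑ j ∈ Finset.univ.erase i0, ℓ wstar (Z j ω))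
        (fun ω => ℓ wstar (Z i0 ω)) P := by
      refine hind2.congr ?_ (Filter.EventuallyEq.refl _ _)
      exact Filter.Eventually.of_forall fun ω => (Finset.sum_apply ω _ _)
    have hXint : Integrable (fun ω => ℓ wstar (Z i0 ω)) P := by
      refine aux_indep_integrable (hXmeas i0)
        (Finset.measurable_sum _ fun j _ => hXmeas j) hind3 ?_
      refine hC2.congr (Filter.Eventually.of_forall fun ω => ?_)
      exact (Finset.sum_erase_add Finset.univ _ (Finset.mem_univ i0)).symm
    refine hc ?_
    have hms : AEStronglyMeasurable (fun z => ℓ wstar z) (P.map (Z i0)) := by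
      rw [hZlaw i0]; exact hc_meas.aestronglyMeasurable
    have := (integrable_map_measure hms (hZmeas i0).aemeasurable).mpr hXint
    rwa [hZlaw i0] at this
  -- population quantities
  have hpoprInt : Integrable (fun w => ∫ z, r w z ∂μ) (P.map W) := hrInt.integral_prod_left
  have hpoprWInt : Integrable (fun ω => ∫ z, r (W ω) z ∂μ) P :=
    (integrable_map_measure hpoprInt.1 hW.aemeasurable).mp hpoprInt
  have hpoprWval : ∫ ω, (∫ z, r (W ω) z ∂μ) ∂P = ρ := by
    rw [← integral_map hW.aemeasurable hpoprInt.1, hρ, integral_prod _ hrInt]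
  have hs2 : MeasurableSet {w : 𝒲 | Integrable (fun z => r w z) μ} :=
    measurableSet_integrable (f := fun (w : 𝒲) (z : 𝒵) => r w z) hrm.stronglyMeasurable
  have haeP : ∀ᵐ ω ∂P, Integrable (fun z => r (W ω) z) μ :=
    (ae_map_iff hW.aemeasurable hs2).mp hrInt.prod_right_ae
  have hAeq : (fun ω => ∫ z, ℓ (W ω) z ∂μ)
      =ᵐ[P] (fun ω => (∫ z, r (W ω) z ∂μ) + ∫ z, ℓ wstar z ∂μ) := by
    filter_upwards [haeP] with ω hω
    have hfun : (fun z => ℓ (W ω) z) = fun z => r (W ω) z + ℓ wstar z := by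
      funext z; simp only [hr]; ring
    rw [hfun, integral_add hω hcInt]
  have hAint : Integrable (fun ω => ∫ z, ℓ (W ω) z ∂μ) P :=
    (hpoprWInt.add (integrable_const _)).congr hAeq.symm
  have hAval : ∫ ω, (∫ z, ℓ (W ω) z ∂μ) ∂P = ρ + ∫ z, ℓ wstar z ∂μ := by
    rw [integral_congr_ae hAeq, integral_add hpoprWInt (integrable_const _), integral_const,
      hpoprWval]
    simp
  have hCiint : ∀ i, Integrable (fun ω => ℓ wstar (Z i ω)) P := by
    intro i
    have hms : AEStronglyMeasurable (fun z => ℓ wstar z) (P.map (Z i)) := by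
      rw [hZlaw i]; exact hc_meas.aestronglyMeasurable
    have h0 : Integrable (fun z => ℓ wstar z) (P.map (Z i)) := by rw [hZlaw i]; exact hcInt
    exact (integrable_map_measure hms (hZmeas i).aemeasurable).mp h0
  have hCival : ∀ i, ∫ ω, ℓ wstar (Z i ω) ∂P = ∫ z, ℓ wstar z ∂μ := by
    intro i
    have hms : AEStronglyMeasurable (fun z => ℓ wstar z) (P.map (Z i)) := by
      rw [hZlaw i]; exact hc_meas.aestronglyMeasurable
    rw [← hZlaw i]
    exact (integral_map (hZmeas i).aemeasurable hms).symm
  have hCsumInt : Integrable (fun ω => (n:ℝ)⁻¹ * ∑ i, ℓ wstar (Z i ω)) P :=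
    (integrable_finset_sum _ fun i _ => hCiint i).const_mul _
  have hCsumVal : ∫ ω, (n:ℝ)⁻¹ * ∑ i, ℓ wstar (Z i ω) ∂P = ∫ z, ℓ wstar z ∂μ := by
    rw [integral_const_mul, integral_finset_sum _ fun i _ => hCiint i]
    simp only [hCival]
    rw [Finset.sum_const, Finset.card_univ, Fintype.card_fin, nsmul_eq_mul]
    field_simp
  -- decompose the generalization error
  have hLHSdecomp : (fun ω => (∫ z, ℓ (W ω) z ∂μ) - (n:ℝ)⁻¹ * ∑ i, ℓ (W ω) (Z i ω))
      =ᵐ[P] (fun ω => ((∫ z, ℓ (W ω) z ∂μ) - (n:ℝ)⁻¹ * ∑ i, r (W ω) (Z i ω))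
        - (n:ℝ)⁻¹ * ∑ i, ℓ wstar (Z i ω)) := by
    refine Filter.Eventually.of_forall fun ω => ?_
    simp only [hr]
    rw [Finset.sum_sub_distrib]
    ring
  have hLHS : ∫ ω, ((∫ z, ℓ (W ω) z ∂μ) - (n:ℝ)⁻¹ * ∑ i, ℓ (W ω) (Z i ω)) ∂P
      = ρ - ∫ ω, (n:ℝ)⁻¹ * ∑ i, r (W ω) (Z i ω) ∂P := by
    have hAemp : Integrable
        (fun ω => (∫ z, ℓ (W ω) z ∂μ) - (n:ℝ)⁻¹ * ∑ i, r (W ω) (Z i ω)) P :=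
      hAint.sub hEmpInt
    rw [integral_congr_ae hLHSdecomp,
      integral_sub hAemp hCsumInt, integral_sub hAint hEmpInt, hAval, hCsumVal]
    ring
  have hIemp : ∫ ω, (n:ℝ)⁻¹ * ∑ i, r (W ω) (Z i ω) ∂P
      = (n:ℝ)⁻¹ * ∑ i, ∫ ω, r (W ω) (Z i ω) ∂P := by
    rw [integral_const_mul, integral_finset_sum _ fun i _ => hriP i]
  -- assemble
  rw [hLHS, hIemp]
  set S := ∑ i, ∫ ω, r (W ω) (Z i ω) ∂P with hS
  set K := ∑ i : Fin n, klDivR (P.map fun ω => (W ω, Z i ω)) ((P.map W).prod μ) with hK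
  have hsumDV : (n:ℝ) * (η * ρ - σ ^ 2 * η ^ 2 / 2) ≤ K + η * S := by
    have h := Finset.sum_le_sum (s := Finset.univ) fun i _ => hDV i
    rw [Finset.sum_add_distrib, ← Finset.mul_sum] at h
    simp [Finset.sum_const, Finset.card_univ, Fintype.card_fin, nsmul_eq_mul, ← hS, ← hK] at h
    linarith
  have haηρ : (n:ℝ) * (η * ρ - σ ^ 2 * η ^ 2 / 2) = (n:ℝ) * η * ρ * aη := by
    rw [haη]
    field_simp
  have hpos : 0 < (n:ℝ) * η * aη := by positivity
  rw [← sub_nonneg]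
  have hexpand : (1 - aη) / aη * ((n:ℝ)⁻¹ * S) + 1 / ((n:ℝ) * η * aη) * K
      - (ρ - (n:ℝ)⁻¹ * S) = (K + η * S - (n:ℝ) * η * ρ * aη) / ((n:ℝ) * η * aη) := by
    field_simp
    ring
  rw [hexpand]
  apply div_nonneg _ hpos.le
  linarith [hsumDV, haηρ]
end

section
/- Suppose that the excess loss r(W', Z') is σ-sub-Gaussian when (W', Z') has joint law P_W ⊗ μ, and let ρ := E_{P_W ⊗ μ}[r(W', Z')] > 0. Then for every η with 0 < η < 2ρ/σ², setting a_η := 1 − ησ²/(2ρ), the expected excess risk satisfies E[ℛ(W)] ≤ (1/a_η) · E[ℛ̂(W, Sₙ)] + (1/(n η a_η)) Σ_{i=1}^n I(W; Zᵢ). -/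
open MeasureTheory ProbabilityTheory

section Aux

variable {α : Type*} [MeasurableSpace α] {ν m : Measure α}

lemma aux_young {a b : ℝ} (hb : 0 ≤ b) : b * a ≤ Real.exp a + b * Real.log b - b := by
  rcases eq_or_lt_of_le hb with h | h
  · rw [← h]
    simpa using (Real.exp_pos a).le
  · have h1 := Real.add_one_le_exp (a - Real.log b)
    have h2 : Real.exp (a - Real.log b) = Real.exp a / b := by
      rw [Real.exp_sub, Real.exp_log h]
    rw [h2] at h1
    have h3 := mul_le_mul_of_nonneg_left h1 h.le
    rw [mul_div_cancel₀ _ h.ne'] at h3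
    nlinarith

lemma klDivR_nonneg' [IsProbabilityMeasure ν] [IsProbabilityMeasure m]
    (hνm : ν ≪ m) (hint : Integrable (llr ν m) ν) : 0 ≤ ∫ x, llr ν m x ∂ν := by
  have hexp : (fun x => Real.exp (-llr ν m x)) =ᵐ[ν] fun x => (m.rnDeriv ν x).toReal :=
    exp_neg_llr hνm
  have hintt : Integrable (fun x => (m.rnDeriv ν x).toReal) ν :=
    Measure.integrable_toReal_rnDeriv
  have hle : ∫ x, -llr ν m x ∂ν ≤ ∫ x, ((m.rnDeriv ν x).toReal - 1) ∂ν := by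
    refine integral_mono_ae hint.neg (hintt.sub (integrable_const 1)) ?_
    filter_upwards [hexp] with x hx
    have h := Real.add_one_le_exp (-llr ν m x)
    rw [hx] at h
    linarith
  rw [integral_neg, integral_sub hintt (integrable_const 1)] at hle
  simp only [integral_const, measure_univ, probReal_univ, ENNReal.toReal_one, smul_eq_mul, one_mul] at hle
  have hbound : ∫ x, (m.rnDeriv ν x).toReal ∂ν ≤ 1 := by
    have h := Measure.setIntegral_toReal_rnDeriv_le (μ := m) (ν := ν) (s := Set.univ)
      (measure_ne_top m Set.univ)
    simpa using h
  linarith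

lemma integrable_of_exp_moments [IsProbabilityMeasure ν] [IsFiniteMeasure m]
    (hνm : ν ≪ m) (h_llr : Integrable (llr ν m) ν) {f : α → ℝ} (hf : Measurable f)
    (hf1 : Integrable (fun x => Real.exp (f x)) m)
    (hf2 : Integrable (fun x => Real.exp (-f x)) m) :
    Integrable f ν := by
  rw [← integrable_rnDeriv_smul_iff hνm]
  have hgl : Integrable (fun x => (ν.rnDeriv m x).toReal • llr ν m x) m :=
    (integrable_rnDeriv_smul_iff hνm).mpr h_llr
  refine Integrable.mono' ((hf1.add hf2).add hgl) ?_ ?_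
  · exact ((Measure.measurable_rnDeriv ν m).ennreal_toReal.smul hf).aestronglyMeasurable
  · refine Filter.Eventually.of_forall fun x => ?_
    have hb : 0 ≤ (ν.rnDeriv m x).toReal := ENNReal.toReal_nonneg
    have hy := aux_young (a := |f x|) hb
    have hllrx : llr ν m x = Real.log (ν.rnDeriv m x).toReal := rfl
    have hexp : Real.exp |f x| ≤ Real.exp (f x) + Real.exp (-f x) := by
      rcases abs_cases (f x) with ⟨h, _⟩ | ⟨h, _⟩ <;> rw [h]
      · linarith [(Real.exp_pos (-f x)).le]
      · linarith [(Real.exp_pos (f x)).le]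
    simp only [smul_eq_mul, Pi.add_apply, Real.norm_eq_abs, abs_mul, abs_of_nonneg hb]
    rw [hllrx] at *
    nlinarith

lemma donsker_varadhan [IsProbabilityMeasure ν] [IsProbabilityMeasure m]
    (hνm : ν ≪ m) (h_llr : Integrable (llr ν m) ν) {f : α → ℝ}
    (hfν : Integrable f ν) (hfm : Integrable (fun x => Real.exp (f x)) m) :
    ∫ x, f x ∂ν ≤ ∫ x, llr ν m x ∂ν + Real.log (∫ x, Real.exp (f x) ∂m) := by
  haveI : IsProbabilityMeasure (m.tilted f) := isProbabilityMeasure_tilted hfm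
  have hν' : ν ≪ m.tilted f := hνm.trans (absolutelyContinuous_tilted hfm)
  have hint' : Integrable (llr ν (m.tilted f)) ν :=
    integrable_llr_tilted_right hνm hfν h_llr hfm
  have h0 : 0 ≤ ∫ x, llr ν (m.tilted f) x ∂ν := klDivR_nonneg' hν' hint'
  rw [integral_llr_tilted_right hνm hfν hfm h_llr] at h0
  linarith

end Aux

/-- **Theorem 3 (fast rate with sub-Gaussian condition, excess risk).** -/
theorem subGaussian_fast_rate_excess_risk_bound
    {Ω 𝒲 𝒵 : Type*} [MeasurableSpace Ω] [MeasurableSpace 𝒲] [MeasurableSpace 𝒵]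
    (P : Measure Ω) [IsProbabilityMeasure P]
    (μ : Measure 𝒵) [IsProbabilityMeasure μ]
    (ℓ : 𝒲 → 𝒵 → ℝ) (hℓ : Measurable (Function.uncurry ℓ))
    (n : ℕ) (hn : 0 < n)
    (Z : Fin n → Ω → 𝒵) (hZmeas : ∀ i, Measurable (Z i))
    (hZlaw : ∀ i, P.map (Z i) = μ)
    (hindep : iIndepFun Z P)
    (W : Ω → 𝒲) (hW : Measurable W)
    (wstar : 𝒲) (hwstar : ∀ w, ∫ z, ℓ wstar z ∂μ ≤ ∫ z, ℓ w z ∂μ)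
    (r : 𝒲 → 𝒵 → ℝ) (hr : r = fun w z => ℓ w z - ℓ wstar z)
    (σ : ℝ) (hσ : 0 < σ)
    -- the expected excess risk under `P_W ⊗ μ` is positive
    (ρ : ℝ) (hρ : ρ = ∫ q, r q.1 q.2 ∂((P.map W).prod μ)) (hρpos : 0 < ρ)
    -- the excess loss is integrable and `σ`-sub-Gaussian under `P_W ⊗ μ`
    (hrInt : Integrable (fun p : 𝒲 × 𝒵 => r p.1 p.2) ((P.map W).prod μ))
    (hMGF : ∀ η : ℝ, Integrable
      (fun p : 𝒲 × 𝒵 => Real.exp (η * (r p.1 p.2 - ρ))) ((P.map W).prod μ))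
    (hsubG : ∀ η : ℝ,
      Real.log (∫ p, Real.exp (η * (r p.1 p.2 - ρ)) ∂((P.map W).prod μ)) ≤ σ ^ 2 * η ^ 2 / 2)
    -- all expectations appearing are finite
    (hRiskInt : Integrable (fun ω => ∫ z, r (W ω) z ∂μ) P)
    (hEmpInt : Integrable (fun ω => (n : ℝ)⁻¹ * ∑ i, r (W ω) (Z i ω)) P)
    (hac : ∀ i, P.map (fun ω => (W ω, Z i ω)) ≪ (P.map W).prod μ)
    (hllr : ∀ i, Integrable (llr (P.map (fun ω => (W ω, Z i ω))) ((P.map W).prod μ))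
        (P.map (fun ω => (W ω, Z i ω)))) :
    ∀ η aη : ℝ, 0 < η → η < 2 * ρ / σ ^ 2 → aη = 1 - η * σ ^ 2 / (2 * ρ) →
    ∫ ω, (∫ z, r (W ω) z ∂μ) ∂P
      ≤ (1 / aη) * (∫ ω, (n : ℝ)⁻¹ * ∑ i, r (W ω) (Z i ω) ∂P)
        + (1 / (n * η * aη)) * ∑ i,
            klDivR (P.map (fun ω => (W ω, Z i ω))) ((P.map W).prod μ) := by
  intro η aη hη hη2 haη
  have hσ2 : (0:ℝ) < σ ^ 2 := by positivity
  have hN : (0:ℝ) < (n:ℝ) := by exact_mod_cast hn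
  have haηpos : 0 < aη := by
    rw [haη, sub_pos, div_lt_one (by positivity : (0:ℝ) < 2 * ρ)]
    exact (lt_div_iff₀ hσ2).mp hη2
  have hrm : Measurable (fun p : 𝒲 × 𝒵 => r p.1 p.2) := by
    rw [hr]
    exact hℓ.sub (hℓ.comp (measurable_const.prodMk measurable_snd))
  haveI hPW : IsProbabilityMeasure (P.map W) := Measure.isProbabilityMeasure_map hW.aemeasurable
  have hpair : ∀ i, Measurable (fun ω => (W ω, Z i ω)) := fun i => hW.prodMk (hZmeas i)
  have hνP : ∀ i, IsProbabilityMeasure (P.map (fun ω => (W ω, Z i ω))) :=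
    fun i => Measure.isProbabilityMeasure_map (hpair i).aemeasurable
  have hg : AEStronglyMeasurable (fun w => ∫ z, r w z ∂μ) (P.map W) :=
    (hrm.stronglyMeasurable.integral_prod_right').aestronglyMeasurable
  have hL : ∫ ω, (∫ z, r (W ω) z ∂μ) ∂P = ρ := by
    rw [hρ, integral_prod _ hrInt]
    exact (integral_map hW.aemeasurable hg).symm
  have hexp : ∀ c : ℝ, Integrable (fun p : 𝒲 × 𝒵 => Real.exp (c * r p.1 p.2))
      ((P.map W).prod μ) := by
    intro c
    have h := (hMGF c).const_mul (Real.exp (c * ρ))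
    refine h.congr (Filter.Eventually.of_forall fun p => ?_)
    show Real.exp (c * ρ) * Real.exp (c * (r p.1 p.2 - ρ)) = Real.exp (c * r p.1 p.2)
    rw [← Real.exp_add]
    congr 1
    ring
  have key : ∀ i : Fin n,
      Integrable (fun ω => r (W ω) (Z i ω)) P ∧
      η * ρ ≤ η * (∫ ω, r (W ω) (Z i ω) ∂P)
        + klDivR (P.map (fun ω => (W ω, Z i ω))) ((P.map W).prod μ) + σ ^ 2 * η ^ 2 / 2 := by
    intro i
    haveI := hνP i
    have hri : Integrable (fun p : 𝒲 × 𝒵 => r p.1 p.2) (P.map (fun ω => (W ω, Z i ω))) := by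
      refine integrable_of_exp_moments (hac i) (hllr i) hrm ?_ ?_
      · simpa using hexp 1
      · simpa [neg_mul] using hexp (-1)
    have hPint : Integrable (fun ω => r (W ω) (Z i ω)) P := by
      have h := (integrable_map_measure hrm.aestronglyMeasurable
        (hpair i).aemeasurable).mp hri
      exact h
    refine ⟨hPint, ?_⟩
    have hEν : ∫ p, r p.1 p.2 ∂(P.map (fun ω => (W ω, Z i ω))) = ∫ ω, r (W ω) (Z i ω) ∂P :=
      integral_map (hpair i).aemeasurable hrm.aestronglyMeasurable
    have hfν : Integrable (fun p : 𝒲 × 𝒵 => -η * (r p.1 p.2 - ρ))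
        (P.map (fun ω => (W ω, Z i ω))) :=
      (hri.sub (integrable_const ρ)).const_mul (-η)
    have hDV := donsker_varadhan (hac i) (hllr i) hfν (hMGF (-η))
    have hlog := hsubG (-η)
    have hI : ∫ p, -η * (r p.1 p.2 - ρ) ∂(P.map (fun ω => (W ω, Z i ω)))
        = -η * ((∫ ω, r (W ω) (Z i ω) ∂P) - ρ) := by
      rw [integral_const_mul, integral_sub hri (integrable_const ρ), integral_const]
      simp [hEν]
    rw [hI] at hDV
    have hsq : σ ^ 2 * (-η) ^ 2 / 2 = σ ^ 2 * η ^ 2 / 2 := by ring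
    rw [hsq] at hlog
    have hKL : klDivR (P.map (fun ω => (W ω, Z i ω))) ((P.map W).prod μ)
        = ∫ x, llr (P.map (fun ω => (W ω, Z i ω))) ((P.map W).prod μ) x
            ∂(P.map (fun ω => (W ω, Z i ω))) := rfl
    rw [hKL]
    nlinarith [hDV, hlog]
  have hPint : ∀ i, Integrable (fun ω => r (W ω) (Z i ω)) P := fun i => (key i).1
  set S := ∑ i, ∫ ω, r (W ω) (Z i ω) ∂P with hS
  set K := ∑ i, klDivR (P.map (fun ω => (W ω, Z i ω))) ((P.map W).prod μ) with hK
  have hEmp : ∫ ω, (n : ℝ)⁻¹ * ∑ i, r (W ω) (Z i ω) ∂P = (n:ℝ)⁻¹ * S := by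
    rw [integral_const_mul, integral_finset_sum _ (fun i _ => hPint i)]
  have hsum : (n:ℝ) * (η * ρ) ≤ η * S + K + (n:ℝ) * (σ ^ 2 * η ^ 2 / 2) := by
    have h := Finset.sum_le_sum (fun i (_ : i ∈ Finset.univ) => (key i).2)
    have h1 : ∑ _i : Fin n, (η * ρ) = (n:ℝ) * (η * ρ) := by
      simp [Finset.sum_const, Finset.card_univ, nsmul_eq_mul]
    have h2 : ∑ i : Fin n, (η * (∫ ω, r (W ω) (Z i ω) ∂P)
          + klDivR (P.map (fun ω => (W ω, Z i ω))) ((P.map W).prod μ) + σ ^ 2 * η ^ 2 / 2)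
        = η * S + K + (n:ℝ) * (σ ^ 2 * η ^ 2 / 2) := by
      rw [Finset.sum_add_distrib, Finset.sum_add_distrib, ← Finset.mul_sum, Finset.sum_const]
      simp [Finset.card_univ, nsmul_eq_mul, hS, hK]
    rw [h1, h2] at h
    exact h
  rw [hL, hEmp]
  have hd : (0:ℝ) < (n:ℝ) * η * aη := by positivity
  have hρaη : ρ * ((n:ℝ) * η * aη) ≤ η * S + K := by
    have e : ρ * ((n:ℝ) * η * aη) = (n:ℝ) * (η * ρ) - (n:ℝ) * (σ ^ 2 * η ^ 2 / 2) := by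
      rw [haη]
      field_simp
    rw [e]
    linarith
  have h3 : ρ ≤ (η * S + K) / ((n:ℝ) * η * aη) := (le_div_iff₀ hd).mpr hρaη
  have he : (η * S + K) / ((n:ℝ) * η * aη) = 1 / aη * ((n:ℝ)⁻¹ * S) + 1 / ((n:ℝ) * η * aη) * K := by
    field_simp
  rw [he] at h3
  exact h3
end

section
/- Suppose the Bernstein condition holds with exponent β = 1 and constant B ≥ 1, i.e. E_{P_W ⊗ μ}[r(W', Z')²] ≤ B · E_{P_W ⊗ μ}[r(W', Z')], that E_{P_W ⊗ μ}[r(W', Z')] ≥ 0, and that r(w, z) ≥ −b for all w ∈ 𝒲 and z ∈ 𝒵 with some b > 0. Then the learning tuple satisfies the (η, 1/2)-central condition with η = min(1/b, 1/(2B(e − 2))), i.e. log E_{P_W ⊗ μ}[exp(−η r(W', Z'))] ≤ −(1/2) η E_{P_W ⊗ μ}[r(W', Z')]. -/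
open MeasureTheory ProbabilityTheory

lemma exp_le_quad_of_nonneg {x : ℝ} (h0 : 0 ≤ x) (h1 : x ≤ 1) :
    Real.exp x ≤ 1 + x + (Real.exp 1 - 2) * x ^ 2 := by
  have hs : Summable (fun n : ℕ => x ^ n / n.factorial) := Real.summable_pow_div_factorial x
  have hs1 : Summable (fun n : ℕ => (1:ℝ) ^ n / n.factorial) := Real.summable_pow_div_factorial 1
  have hex : Real.exp x = ∑' n : ℕ, x ^ n / n.factorial := by
    rw [Real.exp_eq_exp_ℝ, NormedSpace.exp_eq_tsum_div]
  have hex1 : Real.exp 1 = ∑' n : ℕ, (1:ℝ) ^ n / n.factorial := by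
    rw [Real.exp_eq_exp_ℝ, NormedSpace.exp_eq_tsum_div]
  have hsx := Summable.sum_add_tsum_nat_add 2 hs
  have hs1' := Summable.sum_add_tsum_nat_add 2 hs1
  have hr2 : ∑ i ∈ Finset.range 2, x ^ i / (i.factorial : ℝ) = 1 + x := by
    simp [Finset.sum_range_succ]
  have hr21 : ∑ i ∈ Finset.range 2, (1:ℝ) ^ i / (i.factorial : ℝ) = 2 := by
    simp [Finset.sum_range_succ]; norm_num
  have htail : ∑' n : ℕ, x ^ (n + 2) / ((n + 2).factorial : ℝ)
      ≤ ∑' n : ℕ, x ^ 2 * ((1:ℝ) ^ (n + 2) / ((n + 2).factorial : ℝ)) := by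
    refine Summable.tsum_le_tsum (fun n => ?_) ((summable_nat_add_iff 2).2 hs)
      (((summable_nat_add_iff 2).2 hs1).mul_left _)
    have hp : x ^ (n + 2) ≤ x ^ 2 := pow_le_pow_of_le_one h0 h1 (by omega)
    have hfp : (0:ℝ) < ((n + 2).factorial : ℝ) := by positivity
    rw [one_pow, mul_one_div]
    gcongr
  rw [tsum_mul_left] at htail
  have e2 : ∑' n : ℕ, (1:ℝ) ^ (n + 2) / ((n + 2).factorial : ℝ) = Real.exp 1 - 2 := by
    rw [hex1, ← hs1', hr21]; ring
  have ex2 : Real.exp x = 1 + x + ∑' n : ℕ, x ^ (n + 2) / ((n + 2).factorial : ℝ) := by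
    rw [hex, ← hsx, hr2]
  rw [ex2, e2] at *
  nlinarith [htail]

lemma exp_le_quad {x : ℝ} (h1 : x ≤ 1) :
    Real.exp x ≤ 1 + x + (Real.exp 1 - 2) * x ^ 2 := by
  have he : (2.5:ℝ) < Real.exp 1 := by
    have := Real.exp_one_gt_d9; norm_num at this ⊢; linarith
  rcases le_or_gt 0 x with h0 | h0
  · exact exp_le_quad_of_nonneg h0 h1
  rcases le_or_gt (-1) x with hm | hm
  · -- -1 ≤ x < 0 : use exp_bound with n = 4
    have hb := Real.exp_bound (x := x) (by rw [abs_le]; constructor <;> linarith) (n := 4)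
      (by norm_num)
    have hsum : ∑ i ∈ Finset.range 4, x ^ i / (i.factorial : ℝ)
        = 1 + x + x ^ 2 / 2 + x ^ 3 / 6 := by
      simp [Finset.sum_range_succ, Nat.factorial]
    rw [hsum] at hb
    have habs : |x| ^ 4 = x ^ 4 := by
      rw [← abs_pow, abs_of_nonneg (by positivity)]
    rw [habs] at hb
    have hb' : Real.exp x ≤ 1 + x + x ^ 2 / 2 + x ^ 3 / 6 + x ^ 4 * (5 / (24 * 4)) := by
      have := (abs_le.1 hb).2
      norm_num [Nat.factorial] at this ⊢
      linarith
    nlinarith [sq_nonneg x, mul_nonneg (sq_nonneg x) (neg_nonneg.2 h0.le),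
      mul_nonneg (mul_nonneg (sq_nonneg x) (neg_nonneg.2 h0.le)) (neg_nonneg.2 h0.le)]
  · -- x < -1 : exp x ≤ 1/(1-x)
    have hpos : (0:ℝ) < 1 - x := by linarith
    have h1x : Real.exp x ≤ 1 / (1 - x) := by
      rw [le_div_iff₀ hpos]
      have := Real.add_one_le_exp (-x)
      calc Real.exp x * (1 - x) ≤ Real.exp x * Real.exp (-x) := by
            have := Real.exp_pos x; nlinarith
        _ = 1 := by rw [← Real.exp_add]; simp
    have h2 : 1 / (1 - x) ≤ 1 + x + (Real.exp 1 - 2) * x ^ 2 := by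
      rw [div_le_iff₀ hpos]
      nlinarith [sq_nonneg x, mul_nonneg (sq_nonneg x) (le_of_lt (by linarith : (0:ℝ) < -x - 1))]
    linarith


/-- **Corollary 1.** The Bernstein condition with `β = 1` (together with the excess loss being
bounded below by `-b`) implies the `(min(1/b, 1/(2B(e-2))), 1/2)`-central condition. -/
theorem bernstein_implies_central_condition
    {𝒲 𝒵 : Type*} [MeasurableSpace 𝒲] [MeasurableSpace 𝒵]
    (Pw : Measure 𝒲) [IsProbabilityMeasure Pw]
    (μ : Measure 𝒵) [IsProbabilityMeasure μ]
    (ℓ : 𝒲 → 𝒵 → ℝ) (hℓ : Measurable (Function.uncurry ℓ))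
    (wstar : 𝒲) (hwstar : ∀ w, ∫ z, ℓ wstar z ∂μ ≤ ∫ z, ℓ w z ∂μ)
    (r : 𝒲 → 𝒵 → ℝ) (hr : r = fun w z => ℓ w z - ℓ wstar z)
    (B b : ℝ) (hB : 1 ≤ B) (hb : 0 < b)
    -- the excess loss is bounded below by `-b`
    (hrlb : ∀ w z, -b ≤ r w z)
    -- all expectations appearing are finite
    (hrInt : Integrable (fun p : 𝒲 × 𝒵 => r p.1 p.2) (Pw.prod μ))
    (hr2Int : Integrable (fun p : 𝒲 × 𝒵 => (r p.1 p.2) ^ 2) (Pw.prod μ))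
    (hexpInt : Integrable (fun p : 𝒲 × 𝒵 =>
        Real.exp (-(min (1 / b) (1 / (2 * B * (Real.exp 1 - 2)))) * r p.1 p.2)) (Pw.prod μ))
    -- Bernstein condition with exponent `β = 1`
    (hBern : ∫ p, (r p.1 p.2) ^ 2 ∂(Pw.prod μ) ≤ B * ∫ p, r p.1 p.2 ∂(Pw.prod μ))
    -- nonnegative expected excess risk
    (hrpos : 0 ≤ ∫ p, r p.1 p.2 ∂(Pw.prod μ)) :
    Real.log (∫ p, Real.exp (-(min (1 / b) (1 / (2 * B * (Real.exp 1 - 2)))) * r p.1 p.2)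
        ∂(Pw.prod μ))
      ≤ -(1 / 2) * (min (1 / b) (1 / (2 * B * (Real.exp 1 - 2))))
          * ∫ p, r p.1 p.2 ∂(Pw.prod μ) := by
  have he : (2.5:ℝ) < Real.exp 1 := by
    have := Real.exp_one_gt_d9; norm_num at this ⊢; linarith
  set η : ℝ := min (1 / b) (1 / (2 * B * (Real.exp 1 - 2))) with hηdef
  have hBpos : (0:ℝ) < 2 * B * (Real.exp 1 - 2) := by nlinarith
  have hη0 : 0 < η := lt_min (by positivity) (by positivity)
  have hηb : η * b ≤ 1 := by
    have := min_le_left (1 / b) (1 / (2 * B * (Real.exp 1 - 2)))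
    rw [le_div_iff₀ hb] at this; exact this
  have hηB : η * (2 * B * (Real.exp 1 - 2)) ≤ 1 := by
    have := min_le_right (1 / b) (1 / (2 * B * (Real.exp 1 - 2)))
    rw [le_div_iff₀ hBpos] at this; exact this
  -- pointwise bound
  have hpt : ∀ p : 𝒲 × 𝒵, Real.exp (-η * r p.1 p.2)
      ≤ 1 - η * r p.1 p.2 + (Real.exp 1 - 2) * η ^ 2 * (r p.1 p.2) ^ 2 := by
    intro p
    have hx1 : -η * r p.1 p.2 ≤ 1 := by
      have := hrlb p.1 p.2
      nlinarith [hη0.le]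
    have := exp_le_quad hx1
    nlinarith [this]
  set I := ∫ p, r p.1 p.2 ∂(Pw.prod μ) with hI
  -- integrate
  have hf : Integrable (fun p : 𝒲 × 𝒵 => 1 - η * r p.1 p.2) (Pw.prod μ) :=
    (integrable_const 1).sub (hrInt.const_mul η)
  have hg : Integrable (fun p : 𝒲 × 𝒵 =>
      (Real.exp 1 - 2) * η ^ 2 * (r p.1 p.2) ^ 2) (Pw.prod μ) := hr2Int.const_mul _
  have hgInt : Integrable (fun p : 𝒲 × 𝒵 =>
      1 - η * r p.1 p.2 + (Real.exp 1 - 2) * η ^ 2 * (r p.1 p.2) ^ 2) (Pw.prod μ) := hf.add hg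
  have hIb : ∫ p, Real.exp (-η * r p.1 p.2) ∂(Pw.prod μ)
      ≤ 1 - η * I + (Real.exp 1 - 2) * η ^ 2 * ∫ p, (r p.1 p.2) ^ 2 ∂(Pw.prod μ) := by
    have h1 := integral_mono hexpInt hgInt hpt
    rwa [integral_add hf hg,
      integral_sub (integrable_const 1) (hrInt.const_mul η),
      integral_const, integral_const_mul, integral_const_mul, Measure.real, measure_univ,
      ENNReal.toReal_one, smul_eq_mul, mul_one] at h1
  have hstep : ∫ p, Real.exp (-η * r p.1 p.2) ∂(Pw.prod μ) ≤ 1 - (1/2) * η * I := by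
    have h2 : (Real.exp 1 - 2) * η ^ 2 * ∫ p, (r p.1 p.2) ^ 2 ∂(Pw.prod μ)
        ≤ (Real.exp 1 - 2) * η ^ 2 * (B * I) := by
      have : (0:ℝ) ≤ (Real.exp 1 - 2) * η ^ 2 := mul_nonneg (by linarith) (sq_nonneg η)
      exact mul_le_mul_of_nonneg_left hBern this
    have h3 : (Real.exp 1 - 2) * η ^ 2 * (B * I) ≤ (1/2) * η * I := by
      nlinarith [mul_nonneg hη0.le hrpos]
    linarith
  have hYpos : 0 < ∫ p, Real.exp (-η * r p.1 p.2) ∂(Pw.prod μ) := by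
    rw [integral_pos_iff_support_of_nonneg (fun p => (Real.exp_pos _).le) hexpInt]
    have hsup : Function.support (fun p : 𝒲 × 𝒵 => Real.exp (-η * r p.1 p.2)) = Set.univ :=
      Set.eq_univ_of_forall fun p => Real.exp_ne_zero _
    rw [hsup, measure_univ]
    norm_num
  calc Real.log (∫ p, Real.exp (-η * r p.1 p.2) ∂(Pw.prod μ))
      ≤ (∫ p, Real.exp (-η * r p.1 p.2) ∂(Pw.prod μ)) - 1 :=
        Real.log_le_sub_one_of_pos hYpos
    _ ≤ -(1/2) * η * I := by linarith
end

section
/- Suppose the learning tuple satisfies the expected η-central condition, i.e. E_{P_W ⊗ μ}[exp(−η r(W', Z'))] ≤ 1 for some η > 0, and the (u, c)-witness condition, i.e. E_{P_W ⊗ μ}[r(W', Z') · 1{r(W', Z') ≤ u}] ≥ c · E_{P_W ⊗ μ}[r(W', Z')] for some u > 0 and c ∈ (0, 1]. Then for every η' with 0 < η' < η, the learning tuple satisfies the (η', c')-central condition with c' = (c − cη'/η)/(η'u + 1), i.e. log E_{P_W ⊗ μ}[exp(−η' r(W', Z'))] ≤ −c' η' E_{P_W ⊗ μ}[r(W', Z')].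 -/
open MeasureTheory ProbabilityTheory

private lemma exp_interp {β : ℝ} (s : ℝ) (hb : 0 ≤ β) (hb1 : β ≤ 1) :
    Real.exp (β * s) ≤ β * Real.exp s + (1 - β) := by
  have h := convexOn_exp.2 (Set.mem_univ s) (Set.mem_univ (0 : ℝ)) hb
    (by linarith : (0:ℝ) ≤ 1 - β) (by ring)
  simpa using h

private lemma hasDerivAt_G (b x : ℝ) :
    HasDerivAt (fun y => Real.exp (-(b * y)) - 1 + b * y) (b - b * Real.exp (-(b * x))) x := by
  have h1 : HasDerivAt (fun y : ℝ => -(b * y)) (-b) x := by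
    simpa using ((hasDerivAt_id x).const_mul b).fun_neg
  have h2 := (Real.hasDerivAt_exp (-(b * x))).comp x h1
  have h3 : HasDerivAt (fun y : ℝ => b * y) b x := by
    simpa using (hasDerivAt_id x).const_mul b
  have h4 := (h2.sub_const 1).fun_add h3
  refine h4.congr_deriv ?_
  ring

private lemma neg_region {η η' : ℝ} (hη' : 0 < η') (hlt : η' < η) {x : ℝ} (hx : x ≤ 0) :
    η ^ 2 * (Real.exp (-(η' * x)) - 1 + η' * x) ≤ η' ^ 2 * (Real.exp (-(η * x)) - 1 + η * x) := by
  have hη : 0 < η := hη'.trans hlt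
  set f : ℝ → ℝ := fun y =>
    η' ^ 2 * (Real.exp (-(η * y)) - 1 + η * y) - η ^ 2 * (Real.exp (-(η' * y)) - 1 + η' * y)
    with hf
  have hderiv : ∀ y, HasDerivAt f
      (η' ^ 2 * (η - η * Real.exp (-(η * y))) - η ^ 2 * (η' - η' * Real.exp (-(η' * y)))) y :=
    fun y => ((hasDerivAt_G η y).const_mul _).sub ((hasDerivAt_G η' y).const_mul _)
  have hanti : Antitone f := by
    apply antitone_of_deriv_nonpos
    · exact fun y => (hderiv y).differentiableAt
    · intro y
      rw [(hderiv y).deriv]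
      have h := exp_interp (β := η' / η) (-(η * y)) (by positivity)
        (by rw [div_le_one hη]; linarith)
      have he : η' / η * -(η * y) = -(η' * y) := by field_simp
      rw [he] at h
      have h2 := mul_le_mul_of_nonneg_left h hη.le
      have hd : η * (η' / η * Real.exp (-(η * y)) + (1 - η' / η))
          = η' * Real.exp (-(η * y)) + η - η' := by
        field_simp; ring
      have h' : η * Real.exp (-(η' * y)) ≤ η' * Real.exp (-(η * y)) + η - η' := by
        linarith
      nlinarith [h', mul_pos hη hη']
  have h0 : f 0 = 0 := by simp [hf]
  have hx0 := hanti hx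
  rw [h0] at hx0
  simp only [hf] at hx0
  linarith

private lemma pos_region {η η' : ℝ} (hη' : 0 < η') (hlt : η' < η) {x : ℝ} (hx : 0 ≤ x) :
    η ^ 2 * ((1 + η' * x) * (Real.exp (-(η' * x)) - 1 + η' * x))
      ≤ η' ^ 2 * ((1 + η * x) * (Real.exp (-(η * x)) - 1 + η * x)) := by
  have hη : 0 < η := hη'.trans hlt
  set f : ℝ → ℝ := fun y =>
    η' ^ 2 * ((1 + η * y) * (Real.exp (-(η * y)) - 1 + η * y))
      - η ^ 2 * ((1 + η' * y) * (Real.exp (-(η' * y)) - 1 + η' * y)) with hf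
  have hlin : ∀ (b : ℝ) (y : ℝ), HasDerivAt (fun z : ℝ => 1 + b * z) b y := by
    intro b y
    simpa using ((hasDerivAt_id y).const_mul b).const_add 1
  have hderiv : ∀ y, HasDerivAt f
      (η' ^ 2 * (η * (Real.exp (-(η * y)) - 1 + η * y)
          + (1 + η * y) * (η - η * Real.exp (-(η * y))))
        - η ^ 2 * (η' * (Real.exp (-(η' * y)) - 1 + η' * y)
          + (1 + η' * y) * (η' - η' * Real.exp (-(η' * y))))) y :=
    fun y => (((hlin η y).mul (hasDerivAt_G η y)).const_mul _).sub
      (((hlin η' y).mul (hasDerivAt_G η' y)).const_mul _)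
  have hmono : Monotone f := by
    apply monotone_of_deriv_nonneg
    · exact fun y => (hderiv y).differentiableAt
    · intro y
      rw [(hderiv y).deriv]
      have hid : η' ^ 2 * (η * (Real.exp (-(η * y)) - 1 + η * y)
          + (1 + η * y) * (η - η * Real.exp (-(η * y))))
        - η ^ 2 * (η' * (Real.exp (-(η' * y)) - 1 + η' * y)
          + (1 + η' * y) * (η' - η' * Real.exp (-(η' * y))))
          = η ^ 2 * η' ^ 2 * (y * (Real.exp (-(η' * y)) - Real.exp (-(η * y)))) := by
        ring
      rw [hid]
      have hy : 0 ≤ y * (Real.exp (-(η' * y)) - Real.exp (-(η * y))) := by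
        rcases le_or_gt 0 y with h | h
        · have : Real.exp (-(η * y)) ≤ Real.exp (-(η' * y)) := by
            apply Real.exp_le_exp.2; nlinarith
          nlinarith
        · have : Real.exp (-(η' * y)) ≤ Real.exp (-(η * y)) := by
            apply Real.exp_le_exp.2; nlinarith
          nlinarith
      positivity
  have h0 : f 0 = 0 := by simp [hf]
  have hx0 := hmono hx
  rw [h0] at hx0
  simp only [hf] at hx0
  linarith

private lemma heq_aux (η η' u E1 E2 i : ℝ) (hη : η ≠ 0) (h1 : η' * u + 1 ≠ 0) :
    (1 - η' ^ 2 * (η * u + 1) / (η ^ 2 * (η' * u + 1)))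
        + η' ^ 2 * (η * u + 1) / (η ^ 2 * (η' * u + 1)) * E1
        - (E2 + (η - η') * η' / (η * (η' * u + 1)) * i)
      = (η ^ 2 * (η' * u + 1) * (1 - E2) + η' ^ 2 * (η * u + 1) * (E1 - 1)
        - η * (η - η') * η' * i) / (η ^ 2 * (η' * u + 1)) := by
  field_simp
  ring


private lemma key_ineq {η η' u : ℝ} (hη' : 0 < η') (hlt : η' < η) (hu : 0 < u) (x : ℝ) :
    Real.exp (-(η' * x)) + (η - η') * η' / (η * (η' * u + 1)) * (if x ≤ u then x else 0)
      ≤ (1 - η' ^ 2 * (η * u + 1) / (η ^ 2 * (η' * u + 1)))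
        + η' ^ 2 * (η * u + 1) / (η ^ 2 * (η' * u + 1)) * Real.exp (-(η * x)) := by
  have hη : 0 < η := hη'.trans hlt
  have hden : (0:ℝ) < η ^ 2 * (η' * u + 1) := by positivity
  set E1 := Real.exp (-(η * x)) with hE1
  set E2 := Real.exp (-(η' * x)) with hE2
  have key2 : 0 ≤ η ^ 2 * (η' * u + 1) * (1 - E2) + η' ^ 2 * (η * u + 1) * (E1 - 1)
      - η * (η - η') * η' * (if x ≤ u then x else 0) := by
    have G1nn : 0 ≤ E1 - 1 + η * x := by
      nlinarith [Real.add_one_le_exp (-(η * x))]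
    have G2nn : 0 ≤ E2 - 1 + η' * x := by
      nlinarith [Real.add_one_le_exp (-(η' * x))]
    by_cases hxu : x ≤ u
    · rw [if_pos hxu]
      rcases le_or_gt x 0 with hx | hx
      · have NR := neg_region hη' hlt hx
        have t1 : 0 ≤ (η' * u + 1) * (η' ^ 2 * (E1 - 1 + η * x) - η ^ 2 * (E2 - 1 + η' * x)) :=
          mul_nonneg (by nlinarith [mul_pos hη' hu]) (by linarith)
        have t2 : 0 ≤ η' ^ 2 * u * (η - η') * (E1 - 1 + η * x) := by
          have : (0:ℝ) ≤ η' ^ 2 * u * (η - η') := by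
            apply mul_nonneg (by positivity); linarith
          exact mul_nonneg this G1nn
        nlinarith [t1, t2]
      · have PR := pos_region hη' hlt hx.le
        have hfac : (0:ℝ) < 1 + η' * x := by nlinarith
        have t1 : 0 ≤ (η' * u + 1) * (η' ^ 2 * ((1 + η * x) * (E1 - 1 + η * x))
            - η ^ 2 * ((1 + η' * x) * (E2 - 1 + η' * x))) :=
          mul_nonneg (by nlinarith [mul_pos hη' hu]) (by linarith)
        have t2 : 0 ≤ η' ^ 2 * (η - η') * (u - x) * (E1 - 1 + η * x) := by
          have : (0:ℝ) ≤ η' ^ 2 * (η - η') * (u - x) := by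
            apply mul_nonneg (mul_nonneg (sq_nonneg η') (by linarith)); linarith
          exact mul_nonneg this G1nn
        have hD : 0 ≤ (1 + η' * x) * (η ^ 2 * (η' * u + 1) * (1 - E2)
            + η' ^ 2 * (η * u + 1) * (E1 - 1) - η * (η - η') * η' * x) := by
          nlinarith [t1, t2]
        nlinarith [hD, hfac]
    · rw [if_neg hxu]
      push_neg at hxu
      have hx : 0 < x := hu.trans hxu
      have PR := pos_region hη' hlt hx.le
      have hfac : (0:ℝ) < 1 + η' * x := by nlinarith
      have hE1le : E1 ≤ 1 := by
        rw [hE1]; apply Real.exp_le_one_iff.2; nlinarith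
      have t1 : 0 ≤ (η' * u + 1) * (η' ^ 2 * ((1 + η * x) * (E1 - 1 + η * x))
          - η ^ 2 * ((1 + η' * x) * (E2 - 1 + η' * x))) :=
        mul_nonneg (by nlinarith [mul_pos hη' hu]) (by linarith)
      have t3 : 0 ≤ η' ^ 2 * (η - η') * (x - u) * (1 - E1) := by
        have : (0:ℝ) ≤ η' ^ 2 * (η - η') * (x - u) := by
          apply mul_nonneg (mul_nonneg (sq_nonneg η') (by linarith)); linarith
        exact mul_nonneg this (by linarith)
      have t4 : 0 ≤ η * η' * (η - η') * x * (1 + η' * u) := by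
        have h1 : (0:ℝ) ≤ η * η' * (η - η') * x :=
          mul_nonneg (mul_nonneg (mul_pos hη hη').le (by linarith)) hx.le
        exact mul_nonneg h1 (by nlinarith [mul_pos hη' hu])
      have hD : 0 ≤ (1 + η' * x) * (η ^ 2 * (η' * u + 1) * (1 - E2)
          + η' ^ 2 * (η * u + 1) * (E1 - 1)) := by
        nlinarith [t1, t3, t4]
      nlinarith [hD, hfac]
  rw [← sub_nonneg]
  set i : ℝ := (if x ≤ u then x else 0) with hi
  have heq := heq_aux η η' u E1 E2 i hη.ne' (by positivity)
  rw [heq]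
  exact div_nonneg key2 hden.le

/-- **Corollary 2.** The expected `η`-central condition together with the `(u, c)`-witness
condition implies the `(η', (c - cη'/η)/(η'u + 1))`-central condition for every `0 < η' < η`. -/
theorem central_witness_implies_eta_c_central
    {𝒲 𝒵 : Type*} [MeasurableSpace 𝒲] [MeasurableSpace 𝒵]
    (Pw : Measure 𝒲) [IsProbabilityMeasure Pw]
    (μ : Measure 𝒵) [IsProbabilityMeasure μ]
    (ℓ : 𝒲 → 𝒵 → ℝ) (hℓ : Measurable (Function.uncurry ℓ))
    (wstar : 𝒲) (hwstar : ∀ w, ∫ z, ℓ wstar z ∂μ ≤ ∫ z, ℓ w z ∂μ)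
    (r : 𝒲 → 𝒵 → ℝ) (hr : r = fun w z => ℓ w z - ℓ wstar z)
    (η u c : ℝ) (hη : 0 < η) (hu : 0 < u) (hc : 0 < c) (hc1 : c ≤ 1)
    -- all expectations appearing are finite
    (hrInt : Integrable (fun p : 𝒲 × 𝒵 => r p.1 p.2) (Pw.prod μ))
    (hexpInt : ∀ η' : ℝ, 0 < η' → η' ≤ η →
      Integrable (fun p : 𝒲 × 𝒵 => Real.exp (-η' * r p.1 p.2)) (Pw.prod μ))
    (hwitInt : Integrable
      (fun p : 𝒲 × 𝒵 => if r p.1 p.2 ≤ u then r p.1 p.2 else 0) (Pw.prod μ))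
    -- expected `η`-central condition
    (hcentral : ∫ p, Real.exp (-η * r p.1 p.2) ∂(Pw.prod μ) ≤ 1)
    -- `(u, c)`-witness condition
    (hwitness : c * ∫ p, r p.1 p.2 ∂(Pw.prod μ)
      ≤ ∫ p, (if r p.1 p.2 ≤ u then r p.1 p.2 else 0) ∂(Pw.prod μ)) :
    ∀ η' : ℝ, 0 < η' → η' < η →
      Real.log (∫ p, Real.exp (-η' * r p.1 p.2) ∂(Pw.prod μ))
        ≤ -((c - c * η' / η) / (η' * u + 1)) * η' * ∫ p, r p.1 p.2 ∂(Pw.prod μ) := by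
  intro η' hη'pos hη'lt
  set ν := Pw.prod μ with hν
  set a : ℝ := η' ^ 2 * (η * u + 1) / (η ^ 2 * (η' * u + 1)) with ha
  set κ : ℝ := (η - η') * η' / (η * (η' * u + 1)) with hκ
  have hI' : Integrable (fun p : 𝒲 × 𝒵 => Real.exp (-η' * r p.1 p.2)) ν :=
    hexpInt η' hη'pos hη'lt.le
  have hIη : Integrable (fun p : 𝒲 × 𝒵 => Real.exp (-η * r p.1 p.2)) ν :=
    hexpInt η hη le_rfl
  have hkey : ∀ p : 𝒲 × 𝒵,
      Real.exp (-η' * r p.1 p.2) + κ * (if r p.1 p.2 ≤ u then r p.1 p.2 else 0)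
        ≤ (1 - a) + a * Real.exp (-η * r p.1 p.2) := by
    intro p
    have h := key_ineq hη'pos hη'lt hu (r p.1 p.2)
    rw [ha, hκ]
    simpa [neg_mul] using h
  have hmono := integral_mono (μ := ν)
    (hI'.add (hwitInt.const_mul κ))
    ((integrable_const ((1:ℝ) - a)).add (hIη.const_mul a))
    hkey
  simp only [Pi.add_apply] at hmono
  rw [integral_add hI' (hwitInt.const_mul κ), integral_add (integrable_const _) (hIη.const_mul a),
    integral_const_mul, integral_const_mul, integral_const] at hmono
  have hunit : ν.real Set.univ = 1 := by simp [measure_univ]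
  rw [hunit, one_smul] at hmono
  -- abbreviations
  set E' := ∫ p, Real.exp (-η' * r p.1 p.2) ∂ν with hE'
  set Eη := ∫ p, Real.exp (-η * r p.1 p.2) ∂ν with hEη
  set Iw := ∫ p, (if r p.1 p.2 ≤ u then r p.1 p.2 else 0) ∂ν with hIw
  set A := ∫ p, r p.1 p.2 ∂ν with hA
  have hapos : 0 ≤ a := by rw [ha]; positivity
  have hκpos : 0 ≤ κ := by
    rw [hκ]
    apply div_nonneg (by nlinarith) (by nlinarith [mul_pos hη'pos hu])
  have hE'le : E' ≤ 1 - κ * Iw := by nlinarith [hmono, hcentral, hapos]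
  have hwit : κ * (c * A) ≤ κ * Iw := mul_le_mul_of_nonneg_left hwitness hκpos
  have hceq : κ * c = (c - c * η' / η) / (η' * u + 1) * η' := by
    rw [hκ]
    field_simp
  have hE'le2 : E' ≤ 1 - (c - c * η' / η) / (η' * u + 1) * η' * A := by
    have : κ * (c * A) = (c - c * η' / η) / (η' * u + 1) * η' * A := by
      rw [← hceq]; ring
    nlinarith [hE'le, hwit, this]
  have hE'pos : 0 < E' := by
    rw [hE']
    exact integral_exp_pos hI'
  have h1y : 0 < 1 - (c - c * η' / η) / (η' * u + 1) * η' * A := lt_of_lt_of_le hE'pos hE'le2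
  calc Real.log E' ≤ Real.log (1 - (c - c * η' / η) / (η' * u + 1) * η' * A) :=
        Real.log_le_log hE'pos hE'le2
    _ ≤ (1 - (c - c * η' / η) / (η' * u + 1) * η' * A) - 1 := Real.log_le_sub_one_of_pos h1y
    _ = -((c - c * η' / η) / (η' * u + 1)) * η' * A := by ring
end

section
/- Assume the learning tuple satisfies the expected (η, c)-central condition for some η > 0 and 0 < c ≤ 1, i.e. log E_{P_W ⊗ μ}[exp(−η r(W', Z'))] ≤ −c η E_{P_W ⊗ μ}[r(W', Z')]. Then for every η' ∈ (0, η], the expected generalization error satisfies E[ℰ(W, Sₙ)] ≤ ((1 − c)/c) · E[ℛ̂(W, Sₙ)] + (1/(c η' n)) Σ_{i=1}^n I(W; Zᵢ). -/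
open MeasureTheory ProbabilityTheory
open scoped ENNReal

section aux
variable {α : Type*} [MeasurableSpace α] {ν Q : Measure α}

lemma young_aux {a b : ℝ} (hb : 0 ≤ b) :
    a * b ≤ Real.exp a + b * max (Real.log b) 0 := by
  rcases hb.eq_or_lt with h | h
  · rw [← h]
    simp [(Real.exp_pos a).le]
  · have h1 : b * (a - Real.log b + 1) ≤ Real.exp a := by
      calc b * (a - Real.log b + 1) ≤ b * Real.exp (a - Real.log b) :=
            mul_le_mul_of_nonneg_left (Real.add_one_le_exp _) hb
        _ = Real.exp a := by
            rw [Real.exp_sub, Real.exp_log h]; field_simp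
    have h2 : b * (Real.log b - 1) ≤ b * max (Real.log b) 0 :=
      mul_le_mul_of_nonneg_left (by
        have := le_max_left (Real.log b) 0; linarith) hb
    nlinarith

/-- If `ν ≪ Q`, `llr ν Q` is `ν`-integrable and `exp ∘ g` is `Q`-integrable, then the
positive part of `g` is `ν`-integrable. -/
lemma integrable_pos_part_of_exp [IsFiniteMeasure ν] [IsFiniteMeasure Q]
    (hac : ν ≪ Q) (hllr : Integrable (llr ν Q) ν)
    {g : α → ℝ} (hg : Measurable g) (hexp : Integrable (fun x => Real.exp (g x)) Q) :
    Integrable (fun x => max (g x) 0) ν := by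
  have hmeas : Measurable fun x => max (g x) 0 := hg.max measurable_const
  refine ⟨hmeas.aestronglyMeasurable, (hasFiniteIntegral_iff_ofReal (f := fun x => max (g x) 0)
    (Filter.Eventually.of_forall fun x => le_max_right _ _)).mpr ?_⟩
  have hkey : ∫⁻ x, ENNReal.ofReal (max (g x) 0) ∂ν
      = ∫⁻ x, ν.rnDeriv Q x * ENNReal.ofReal (max (g x) 0) ∂Q :=
    (lintegral_rnDeriv_mul hac (by fun_prop)).symm
  rw [hkey]
  have hbound : ∀ᵐ x ∂Q, ν.rnDeriv Q x * ENNReal.ofReal (max (g x) 0)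
      ≤ ENNReal.ofReal (Real.exp (g x) + 1)
        + ν.rnDeriv Q x * ENNReal.ofReal (max (llr ν Q x) 0) := by
    filter_upwards [Measure.rnDeriv_lt_top ν Q] with x hx
    set b : ℝ := (ν.rnDeriv Q x).toReal with hbdef
    have hb : 0 ≤ b := ENNReal.toReal_nonneg
    have hρ : ν.rnDeriv Q x = ENNReal.ofReal b := (ENNReal.ofReal_toReal hx.ne).symm
    have hreal : max (g x) 0 * b ≤ (Real.exp (g x) + 1) + b * max (Real.log b) 0 := by
      have h1 := young_aux (a := max (g x) 0) hb
      have h2 : Real.exp (max (g x) 0) ≤ Real.exp (g x) + 1 := by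
        rcases le_total (g x) 0 with h | h
        · rw [max_eq_right h]; simp [(Real.exp_pos (g x)).le]
        · rw [max_eq_left h]; linarith
      linarith
    have hllrx : llr ν Q x = Real.log b := by rw [llr_def]
    rw [hρ, ← ENNReal.ofReal_mul hb, hllrx, ← ENNReal.ofReal_mul hb, ← ENNReal.ofReal_add
      (by positivity) (by positivity), mul_comm b]
    exact ENNReal.ofReal_le_ofReal (by rw [mul_comm b] at hreal; linarith)
  calc ∫⁻ x, ν.rnDeriv Q x * ENNReal.ofReal (max (g x) 0) ∂Q
      ≤ ∫⁻ x, (ENNReal.ofReal (Real.exp (g x) + 1)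
          + ν.rnDeriv Q x * ENNReal.ofReal (max (llr ν Q x) 0)) ∂Q := lintegral_mono_ae hbound
    _ = ∫⁻ x, ENNReal.ofReal (Real.exp (g x) + 1) ∂Q
          + ∫⁻ x, ν.rnDeriv Q x * ENNReal.ofReal (max (llr ν Q x) 0) ∂Q := by
        refine lintegral_add_left (by fun_prop) _
    _ < ⊤ := by
        have h1 : ∫⁻ x, ENNReal.ofReal (Real.exp (g x) + 1) ∂Q < ⊤ :=
          (hexp.add (integrable_const 1)).lintegral_lt_top
        have h2 : ∫⁻ x, ν.rnDeriv Q x * ENNReal.ofReal (max (llr ν Q x) 0) ∂Q < ⊤ := by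
          rw [lintegral_rnDeriv_mul hac
            (((measurable_llr ν Q).max measurable_const).ennreal_ofReal.aemeasurable)]
          exact hllr.pos_part.lintegral_lt_top
        exact ENNReal.add_lt_top.mpr ⟨h1, h2⟩

/-- Gibbs' inequality: the KL divergence integral is nonnegative. -/
lemma integral_llr_nonneg' [IsProbabilityMeasure ν] [IsProbabilityMeasure Q]
    (hac : ν ≪ Q) (hllr : Integrable (llr ν Q) ν) : 0 ≤ ∫ x, llr ν Q x ∂ν := by
  set φ : α → ℝ := fun x => 1 - ((ν.rnDeriv Q x).toReal)⁻¹ with hφdef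
  have hinvmeas : Measurable fun x => ((ν.rnDeriv Q x).toReal)⁻¹ :=
    ((Measure.measurable_rnDeriv ν Q).ennreal_toReal).inv
  have hφmeas : Measurable φ := Measurable.sub measurable_const hinvmeas
  have hptwise : ∀ᵐ x ∂ν, φ x ≤ llr ν Q x := by
    filter_upwards [Measure.rnDeriv_pos hac, hac.ae_le (Measure.rnDeriv_lt_top ν Q)]
      with x hpos hlt
    have hb : 0 < (ν.rnDeriv Q x).toReal := ENNReal.toReal_pos hpos.ne' hlt.ne
    have : Real.log ((ν.rnDeriv Q x).toReal)⁻¹ ≤ ((ν.rnDeriv Q x).toReal)⁻¹ - 1 :=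
      Real.log_le_sub_one_of_pos (by positivity)
    rw [Real.log_inv] at this
    rw [llr_def]
    simp only [hφdef]
    linarith
  have hlint : ∫⁻ x, ENNReal.ofReal (((ν.rnDeriv Q x).toReal)⁻¹) ∂ν ≤ 1 := by
    rw [← lintegral_rnDeriv_mul hac hinvmeas.ennreal_ofReal.aemeasurable]
    have : ∀ᵐ x ∂Q, ν.rnDeriv Q x * ENNReal.ofReal (((ν.rnDeriv Q x).toReal)⁻¹) ≤ 1 := by
      filter_upwards [Measure.rnDeriv_lt_top ν Q] with x hlt
      rcases eq_or_ne (ν.rnDeriv Q x) 0 with h0 | h0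
      · simp [h0]
      · have hb : 0 < (ν.rnDeriv Q x).toReal := ENNReal.toReal_pos h0 hlt.ne
        rw [ENNReal.ofReal_inv_of_pos hb, ENNReal.ofReal_toReal hlt.ne,
          ENNReal.mul_inv_cancel h0 hlt.ne]
    calc ∫⁻ x, ν.rnDeriv Q x * ENNReal.ofReal (((ν.rnDeriv Q x).toReal)⁻¹) ∂Q
        ≤ ∫⁻ _, 1 ∂Q := lintegral_mono_ae this
      _ = 1 := by simp
  have hinvint : Integrable (fun x => ((ν.rnDeriv Q x).toReal)⁻¹) ν := by
    exact ⟨hinvmeas.aestronglyMeasurable, (hasFiniteIntegral_iff_ofReal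
      (f := fun x => ((ν.rnDeriv Q x).toReal)⁻¹)
      (Filter.Eventually.of_forall fun x => by positivity)).mpr
      (lt_of_le_of_lt hlint ENNReal.one_lt_top)⟩
  have hφint : Integrable φ ν := (integrable_const 1).sub hinvint
  have h1 : ∫ x, φ x ∂ν ≤ ∫ x, llr ν Q x ∂ν := integral_mono_ae hφint hllr hptwise
  have h2 : (0:ℝ) ≤ ∫ x, φ x ∂ν := by
    have hIinv : ∫ x, ((ν.rnDeriv Q x).toReal)⁻¹ ∂ν ≤ 1 := by
      rw [integral_eq_lintegral_of_nonneg_ae (Filter.Eventually.of_forall fun x => by positivity)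
        hinvmeas.aestronglyMeasurable]
      calc (∫⁻ x, ENNReal.ofReal (((ν.rnDeriv Q x).toReal)⁻¹) ∂ν).toReal
          ≤ (1 : ℝ≥0∞).toReal := ENNReal.toReal_mono ENNReal.one_ne_top hlint
        _ = 1 := by simp
    have : ∫ x, φ x ∂ν = 1 - ∫ x, ((ν.rnDeriv Q x).toReal)⁻¹ ∂ν := by
      rw [hφdef, integral_sub (integrable_const 1) hinvint]; simp
    linarith
  linarith

/-- Donsker–Varadhan inequality. -/
lemma dv_bound [IsProbabilityMeasure ν] [IsProbabilityMeasure Q]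
    (hac : ν ≪ Q) (hllr : Integrable (llr ν Q) ν)
    {g : α → ℝ} (hgint : Integrable g ν)
    (hexp : Integrable (fun x => Real.exp (g x)) Q) :
    ∫ x, g x ∂ν ≤ ∫ x, llr ν Q x ∂ν + Real.log (∫ x, Real.exp (g x) ∂Q) := by
  have hac' : ν ≪ Q.tilted g := hac.trans (absolutelyContinuous_tilted hexp)
  haveI : IsProbabilityMeasure (Q.tilted g) := isProbabilityMeasure_tilted hexp
  have hint' : Integrable (llr ν (Q.tilted g)) ν :=
    integrable_llr_tilted_right hac hgint hllr hexp
  have h0 : 0 ≤ ∫ x, llr ν (Q.tilted g) x ∂ν :=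
    integral_llr_nonneg' hac' hint'
  rw [integral_llr_tilted_right hac hgint hexp hllr] at h0
  linarith

end aux

/-- **Theorem 4 (fast rate with the `(η, c)`-central condition, generalization error).** -/
theorem eta_c_central_generalization_bound
    {Ω 𝒲 𝒵 : Type*} [MeasurableSpace Ω] [MeasurableSpace 𝒲] [MeasurableSpace 𝒵]
    (P : Measure Ω) [IsProbabilityMeasure P]
    (μ : Measure 𝒵) [IsProbabilityMeasure μ]
    (ℓ : 𝒲 → 𝒵 → ℝ) (hℓ : Measurable (Function.uncurry ℓ))
    (n : ℕ) (hn : 0 < n)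
    (Z : Fin n → Ω → 𝒵) (hZmeas : ∀ i, Measurable (Z i))
    (hZlaw : ∀ i, P.map (Z i) = μ)
    (hindep : iIndepFun Z P)
    (W : Ω → 𝒲) (hW : Measurable W)
    (wstar : 𝒲) (hwstar : ∀ w, ∫ z, ℓ wstar z ∂μ ≤ ∫ z, ℓ w z ∂μ)
    (r : 𝒲 → 𝒵 → ℝ) (hr : r = fun w z => ℓ w z - ℓ wstar z)
    (η c : ℝ) (hη : 0 < η) (hc : 0 < c) (hc1 : c ≤ 1)
    -- all expectations appearing are finite
    (hrInt : Integrable (fun p : 𝒲 × 𝒵 => r p.1 p.2) ((P.map W).prod μ))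
    (hexpInt : ∀ η' : ℝ, 0 < η' → η' ≤ η →
      Integrable (fun p : 𝒲 × 𝒵 => Real.exp (-η' * r p.1 p.2)) ((P.map W).prod μ))
    (hgenInt : Integrable
      (fun ω => (∫ z, ℓ (W ω) z ∂μ) - (n : ℝ)⁻¹ * ∑ i, ℓ (W ω) (Z i ω)) P)
    (hEmpInt : Integrable (fun ω => (n : ℝ)⁻¹ * ∑ i, r (W ω) (Z i ω)) P)
    (hac : ∀ i, P.map (fun ω => (W ω, Z i ω)) ≪ (P.map W).prod μ)
    (hllr : ∀ i, Integrable (llr (P.map (fun ω => (W ω, Z i ω))) ((P.map W).prod μ))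
        (P.map (fun ω => (W ω, Z i ω))))
    -- expected `(η, c)`-central condition
    (hcentral : Real.log (∫ p, Real.exp (-η * r p.1 p.2) ∂((P.map W).prod μ))
      ≤ -c * η * ∫ p, r p.1 p.2 ∂((P.map W).prod μ)) :
    ∀ η' : ℝ, 0 < η' → η' ≤ η →
    ∫ ω, ((∫ z, ℓ (W ω) z ∂μ) - (n : ℝ)⁻¹ * ∑ i, ℓ (W ω) (Z i ω)) ∂P
      ≤ (1 - c) / c * (∫ ω, (n : ℝ)⁻¹ * ∑ i, r (W ω) (Z i ω) ∂P)
        + (1 / (c * η' * n)) * ∑ i,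
            klDivR (P.map (fun ω => (W ω, Z i ω))) ((P.map W).prod μ) := by
  intro η' hη'pos hη'le
  have hn' : (0:ℝ) < n := Nat.cast_pos.mpr hn
  have hnne : (n:ℝ) ≠ 0 := hn'.ne'
  haveI hPW : IsProbabilityMeasure (P.map W) := Measure.isProbabilityMeasure_map hW.aemeasurable
  have hrMeas : Measurable (fun p : 𝒲 × 𝒵 => r p.1 p.2) := by
    subst hr
    exact hℓ.sub (hℓ.comp (measurable_const.prodMk measurable_snd))
  have hrw : ∀ w z, r w z = ℓ w z - ℓ wstar z := fun w z => by rw [hr]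
  have hℓstarMeas : Measurable (ℓ wstar) := hℓ.comp (measurable_const.prodMk measurable_id)
  have hembMeas : ∀ i, Measurable fun ω => (W ω, Z i ω) := fun i => hW.prodMk (hZmeas i)
  have hνprob : ∀ i : Fin n, IsProbabilityMeasure (P.map (fun ω => (W ω, Z i ω))) :=
    fun i => Measure.isProbabilityMeasure_map (hembMeas i).aemeasurable
  have hXmeas : ∀ i : Fin n, Measurable fun ω => r (W ω) (Z i ω) :=
    fun i => hrMeas.comp (hembMeas i)
  -- negative parts of `r (W ω) (Z i ω)` are integrable
  have hnegInt : ∀ i : Fin n, Integrable (fun ω => max (-(r (W ω) (Z i ω))) 0) P := by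
    intro i
    haveI := hνprob i
    have h1 : Integrable (fun p : 𝒲 × 𝒵 => max (-η * r p.1 p.2) 0)
        (P.map (fun ω => (W ω, Z i ω))) :=
      integrable_pos_part_of_exp (hac i) (hllr i) (hrMeas.const_mul (-η))
        (hexpInt η hη le_rfl)
    have h2 : Integrable (fun ω => max (-η * r (W ω) (Z i ω)) 0) P :=
      (integrable_map_measure ((hrMeas.const_mul (-η)).max measurable_const).aestronglyMeasurable
        (hembMeas i).aemeasurable).mp h1
    have h3 := h2.const_mul η⁻¹
    refine h3.congr (Filter.Eventually.of_forall fun ω => ?_)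
    show η⁻¹ * max (-η * r (W ω) (Z i ω)) 0 = max (-(r (W ω) (Z i ω))) 0
    rw [mul_max_of_nonneg _ _ (inv_nonneg.mpr hη.le), mul_zero]
    congr 1
    field_simp
  -- the sum is integrable
  have hSumX : Integrable (fun ω => ∑ i, r (W ω) (Z i ω)) P := by
    have h := hEmpInt.const_mul (n:ℝ)
    refine h.congr (Filter.Eventually.of_forall fun ω => ?_)
    field_simp
  -- hence each term is integrable
  have hXint : ∀ i : Fin n, Integrable (fun ω => r (W ω) (Z i ω)) P := by
    intro i
    have hB : Integrable
        (fun ω => |∑ j, r (W ω) (Z j ω)| + ∑ j, max (-(r (W ω) (Z j ω))) 0) P :=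
      hSumX.abs.add (integrable_finset_sum _ fun j _ => hnegInt j)
    refine hB.mono' ((hXmeas i).aestronglyMeasurable) (Filter.Eventually.of_forall fun ω => ?_)
    rw [Real.norm_eq_abs, abs_le]
    have hmaxsum : ∀ j : Fin n, -(r (W ω) (Z j ω)) ≤ max (-(r (W ω) (Z j ω))) 0 :=
      fun j => le_max_left _ _
    have hsumnonneg : (0:ℝ) ≤ ∑ j, max (-(r (W ω) (Z j ω))) 0 :=
      Finset.sum_nonneg fun j _ => le_max_right _ _
    constructor
    · have h2 : max (-(r (W ω) (Z i ω))) 0 ≤ ∑ j, max (-(r (W ω) (Z j ω))) 0 :=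
        Finset.single_le_sum (f := fun j => max (-(r (W ω) (Z j ω))) 0)
          (fun j _ => le_max_right _ _) (Finset.mem_univ i)
      have := hmaxsum i
      have habs := abs_nonneg (∑ j, r (W ω) (Z j ω))
      linarith
    · have hsplit : r (W ω) (Z i ω) + ∑ j ∈ Finset.univ.erase i, r (W ω) (Z j ω)
          = ∑ j, r (W ω) (Z j ω) :=
        Finset.add_sum_erase _ (fun j => r (W ω) (Z j ω)) (Finset.mem_univ i)
      have h4 : -∑ j ∈ Finset.univ.erase i, r (W ω) (Z j ω)
          ≤ ∑ j ∈ Finset.univ.erase i, max (-(r (W ω) (Z j ω))) 0 := by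
        rw [← Finset.sum_neg_distrib]
        exact Finset.sum_le_sum fun j _ => le_max_left _ _
      have h5 : ∑ j ∈ Finset.univ.erase i, max (-(r (W ω) (Z j ω))) 0
          ≤ ∑ j, max (-(r (W ω) (Z j ω))) 0 :=
        Finset.sum_le_sum_of_subset_of_nonneg (Finset.subset_univ _)
          (fun j _ _ => le_max_right _ _)
      have h6 := le_abs_self (∑ j, r (W ω) (Z j ω))
      linarith
  -- r is integrable w.r.t. each joint law
  have hXν : ∀ i : Fin n, Integrable (fun p : 𝒲 × 𝒵 => r p.1 p.2)
      (P.map (fun ω => (W ω, Z i ω))) := fun i =>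
    (integrable_map_measure hrMeas.aestronglyMeasurable (hembMeas i).aemeasurable).mpr (hXint i)
  -- nonnegativity of the mutual-information terms
  have hInn : ∀ i : Fin n,
      0 ≤ klDivR (P.map (fun ω => (W ω, Z i ω))) ((P.map W).prod μ) := by
    intro i
    haveI := hνprob i
    exact integral_llr_nonneg' (hac i) (hllr i)
  -- key per-index inequality from Donsker–Varadhan + central condition
  have key : ∀ i : Fin n, c * η * (∫ p, r p.1 p.2 ∂((P.map W).prod μ))
      ≤ η * (∫ ω, r (W ω) (Z i ω) ∂P)
        + klDivR (P.map (fun ω => (W ω, Z i ω))) ((P.map W).prod μ) := by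
    intro i
    haveI := hνprob i
    have hdv := dv_bound (hac i) (hllr i) (g := fun p : 𝒲 × 𝒵 => -η * r p.1 p.2)
      ((hXν i).const_mul (-η)) (hexpInt η hη le_rfl)
    have h1 : ∫ p, -η * r p.1 p.2 ∂(P.map (fun ω => (W ω, Z i ω)))
        = -η * ∫ ω, r (W ω) (Z i ω) ∂P := by
      rw [integral_const_mul,
        integral_map (hembMeas i).aemeasurable hrMeas.aestronglyMeasurable]
    rw [h1] at hdv
    have h2 := hcentral
    simp only [klDivR]
    nlinarith [hdv, h2]
  by_cases hints : Integrable (fun z => ℓ wstar z) μ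
  · -- main case
    have hYint : ∀ i : Fin n, Integrable (fun ω => ℓ wstar (Z i ω)) P := by
      intro i
      refine (integrable_map_measure ?_ (hZmeas i).aemeasurable).mp ?_
      · rw [hZlaw i]; exact hℓstarMeas.aestronglyMeasurable
      · rw [hZlaw i]; exact hints
    have hYval : ∀ i : Fin n, ∫ ω, ℓ wstar (Z i ω) ∂P = ∫ z, ℓ wstar z ∂μ := by
      intro i
      rw [← integral_map (hZmeas i).aemeasurable
        (by rw [hZlaw i]; exact hℓstarMeas.aestronglyMeasurable), hZlaw i]
    have hLrInt : Integrable (fun w => ∫ z, r w z ∂μ) (P.map W) := hrInt.integral_prod_left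
    have hLrW : Integrable (fun ω => ∫ z, r (W ω) z ∂μ) P :=
      (integrable_map_measure hLrInt.aestronglyMeasurable hW.aemeasurable).mp hLrInt
    have hLrWval : ∫ ω, (∫ z, r (W ω) z ∂μ) ∂P = ∫ p, r p.1 p.2 ∂((P.map W).prod μ) := by
      rw [← integral_map hW.aemeasurable hLrInt.aestronglyMeasurable,
        integral_prod _ hrInt]
    have hae : ∀ᵐ ω ∂P, (∫ z, ℓ (W ω) z ∂μ)
        = (∫ z, r (W ω) z ∂μ) + ∫ z, ℓ wstar z ∂μ := by
      have h1 : ∀ᵐ w ∂(P.map W), (∫ z, ℓ w z ∂μ)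
          = (∫ z, r w z ∂μ) + ∫ z, ℓ wstar z ∂μ := by
        filter_upwards [hrInt.prod_right_ae] with w hw
        calc ∫ z, ℓ w z ∂μ = ∫ z, (r w z + ℓ wstar z) ∂μ := by
              congr 1; funext z; rw [hrw]; ring
          _ = (∫ z, r w z ∂μ) + ∫ z, ℓ wstar z ∂μ := integral_add hw hints
      exact ae_of_ae_map hW.aemeasurable h1
    have hLHS : ∫ ω, ((∫ z, ℓ (W ω) z ∂μ) - (n:ℝ)⁻¹ * ∑ i, ℓ (W ω) (Z i ω)) ∂P
        = (∫ p, r p.1 p.2 ∂((P.map W).prod μ))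
          - (n:ℝ)⁻¹ * ∑ i, ∫ ω, r (W ω) (Z i ω) ∂P := by
      have heq : ∀ᵐ ω ∂P, (∫ z, ℓ (W ω) z ∂μ) - (n:ℝ)⁻¹ * ∑ i, ℓ (W ω) (Z i ω)
          = ((∫ z, r (W ω) z ∂μ) + ∫ z, ℓ wstar z ∂μ)
            - (n:ℝ)⁻¹ * ∑ i, (r (W ω) (Z i ω) + ℓ wstar (Z i ω)) := by
        filter_upwards [hae] with ω hω
        rw [hω]
        congr 2
        refine Finset.sum_congr rfl fun i _ => ?_
        rw [hrw]; ring
      have hInt1 : Integrable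
          (fun ω => (∫ z, r (W ω) z ∂μ) + ∫ z, ℓ wstar z ∂μ) P :=
        hLrW.add (integrable_const _)
      have hIntS : Integrable
          (fun ω => ∑ i, (r (W ω) (Z i ω) + ℓ wstar (Z i ω))) P :=
        integrable_finset_sum _ fun i _ => (hXint i).add (hYint i)
      have hInt2 : Integrable
          (fun ω => (n:ℝ)⁻¹ * ∑ i, (r (W ω) (Z i ω) + ℓ wstar (Z i ω))) P :=
        hIntS.const_mul _
      rw [integral_congr_ae heq, integral_sub hInt1 hInt2,
        integral_add hLrW (integrable_const _), integral_const, integral_const_mul,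
        integral_finset_sum _ (fun i _ => show Integrable
          (fun ω => r (W ω) (Z i ω) + ℓ wstar (Z i ω)) P from (hXint i).add (hYint i))]
      have : ∀ i : Fin n, ∫ ω, (r (W ω) (Z i ω) + ℓ wstar (Z i ω)) ∂P
          = (∫ ω, r (W ω) (Z i ω) ∂P) + ∫ z, ℓ wstar z ∂μ := fun i => by
        rw [integral_add (hXint i) (hYint i), hYval i]
      rw [Finset.sum_congr rfl fun i _ => this i, Finset.sum_add_distrib,
        Finset.sum_const, Finset.card_univ, Fintype.card_fin, nsmul_eq_mul, hLrWval]
      simp only [measure_univ, ENNReal.toReal_one, smul_eq_mul, one_mul, probReal_univ]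
      field_simp
      ring
    have hRhat : ∫ ω, (n:ℝ)⁻¹ * ∑ i, r (W ω) (Z i ω) ∂P
        = (n:ℝ)⁻¹ * ∑ i, ∫ ω, r (W ω) (Z i ω) ∂P := by
      rw [integral_const_mul, integral_finset_sum _ fun i _ => hXint i]
    rw [hLHS, hRhat]
    set m := ∫ p, r p.1 p.2 ∂((P.map W).prod μ) with hm
    set s := ∑ i, ∫ ω, r (W ω) (Z i ω) ∂P with hs
    set T := ∑ i, klDivR (P.map (fun ω => (W ω, Z i ω))) ((P.map W).prod μ) with hT
    have hK : (n:ℝ) * (c * η * m) ≤ η * s + T := by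
      calc (n:ℝ) * (c * η * m) = ∑ _i : Fin n, c * η * m := by
            rw [Finset.sum_const, Finset.card_univ, Fintype.card_fin, nsmul_eq_mul]
        _ ≤ ∑ i, (η * (∫ ω, r (W ω) (Z i ω) ∂P)
              + klDivR (P.map (fun ω => (W ω, Z i ω))) ((P.map W).prod μ)) :=
            Finset.sum_le_sum fun i _ => key i
        _ = η * s + T := by rw [Finset.sum_add_distrib, Finset.mul_sum]
    have hTpos : 0 ≤ T := Finset.sum_nonneg fun i _ => hInn i
    have step1 : m - (n:ℝ)⁻¹ * s ≤ (1-c)/c * ((n:ℝ)⁻¹ * s) + (1/(c*η*n)) * T := by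
      have hd : (0:ℝ) < c*η*n := by positivity
      rw [show (1-c)/c * ((n:ℝ)⁻¹ * s) + (1/(c*η*n)) * T = ((1-c)*η*s + T)/(c*η*n) by
        field_simp]
      rw [le_div_iff₀ hd]
      have e1 : (m - (n:ℝ)⁻¹*s) * (c*η*n) = (n:ℝ)*(c*η*m) - c*(η*s) := by
        field_simp
      have e2 : (1-c)*η*s + T = (η*s + T) - c*(η*s) := by ring
      rw [e1, e2]
      exact sub_le_sub_right hK _
    have hle : (1/(c*η*n)) * T ≤ (1/(c*η'*n)) * T := by
      refine mul_le_mul_of_nonneg_right ?_ hTpos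
      refine one_div_le_one_div_of_le (by positivity) ?_
      have h := mul_le_mul_of_nonneg_right hη'le (le_of_lt hn')
      nlinarith
    linarith
  · -- degenerate case: contradiction with independence
    exfalso
    have h1 : ∀ᵐ w ∂(P.map W), (∫ z, ℓ w z ∂μ) = 0 := by
      filter_upwards [hrInt.prod_right_ae] with w hw
      apply integral_undef
      intro hcon
      apply hints
      have heq : (fun z => ℓ wstar z) = fun z => ℓ w z - r w z := by
        funext z; rw [hrw]; ring
      rw [heq]
      exact hcon.sub hw
    have h2 : ∀ᵐ ω ∂P, (∫ z, ℓ (W ω) z ∂μ) = 0 := ae_of_ae_map hW.aemeasurable h1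
    have hS : Integrable (fun ω => ∑ i, ℓ wstar (Z i ω)) P := by
      have h3 : Integrable (fun ω => ((∫ z, ℓ (W ω) z ∂μ)
          - (n:ℝ)⁻¹ * ∑ i, ℓ (W ω) (Z i ω)) + (n:ℝ)⁻¹ * ∑ i, r (W ω) (Z i ω)) P :=
        hgenInt.add hEmpInt
      have h4 : Integrable (fun ω => (n:ℝ)⁻¹ * ∑ i, ℓ wstar (Z i ω)) P := by
        refine h3.neg.congr ?_
        filter_upwards [h2] with ω hω
        show -(((∫ z, ℓ (W ω) z ∂μ) - (n:ℝ)⁻¹ * ∑ i, ℓ (W ω) (Z i ω))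
            + (n:ℝ)⁻¹ * ∑ i, r (W ω) (Z i ω)) = (n:ℝ)⁻¹ * ∑ i, ℓ wstar (Z i ω)
        rw [hω]
        have hsum : ∑ i, ℓ (W ω) (Z i ω) - ∑ i, r (W ω) (Z i ω) = ∑ i, ℓ wstar (Z i ω) := by
          rw [← Finset.sum_sub_distrib]
          exact Finset.sum_congr rfl fun i _ => by rw [hrw]; ring
        rw [← hsum]
        ring
      have h5 := h4.const_mul (n:ℝ)
      refine h5.congr (Filter.Eventually.of_forall fun ω => ?_)
      field_simp
    have hYmeas : ∀ i : Fin n, Measurable fun ω => ℓ wstar (Z i ω) :=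
      fun i => hℓstarMeas.comp (hZmeas i)
    have hYindep : iIndepFun
        (fun i => fun ω => ℓ wstar (Z i ω)) P :=
      hindep.comp (fun _ => ℓ wstar) (fun _ => hℓstarMeas)
    set i0 : Fin n := ⟨0, hn⟩ with hi0
    set T' : Ω → ℝ := ∑ j ∈ Finset.univ.erase i0, (fun ω => ℓ wstar (Z j ω)) with hT'
    have hT'meas : Measurable T' := by
      have he : T' = fun ω => ∑ j ∈ Finset.univ.erase i0, ℓ wstar (Z j ω) := by
        funext ω; simp [hT', Finset.sum_apply]
      rw [he]
      exact Finset.measurable_sum _ fun j _ => hYmeas j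
    have hT'indep : IndepFun T' (fun ω => ℓ wstar (Z i0 ω)) P :=
      hYindep.indepFun_finsetSum_of_notMem (fun i => hYmeas i) (Finset.notMem_erase i0 _)
    haveI : IsProbabilityMeasure (P.map T') := Measure.isProbabilityMeasure_map hT'meas.aemeasurable
    haveI : IsProbabilityMeasure (P.map (fun ω => ℓ wstar (Z i0 ω))) :=
      Measure.isProbabilityMeasure_map (hYmeas i0).aemeasurable
    have hmapeq := (indepFun_iff_map_prod_eq_prod_map_map hT'meas.aemeasurable
      (hYmeas i0).aemeasurable).mp hT'indep
    have hadd : Integrable (fun q : ℝ × ℝ => q.1 + q.2)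
        ((P.map T').prod (P.map (fun ω => ℓ wstar (Z i0 ω)))) := by
      rw [← hmapeq]
      refine (integrable_map_measure (measurable_fst.add measurable_snd).aestronglyMeasurable
        (hT'meas.prodMk (hYmeas i0)).aemeasurable).mpr ?_
      refine hS.congr (Filter.Eventually.of_forall fun ω => ?_)
      show ∑ i, ℓ wstar (Z i ω) = T' ω + ℓ wstar (Z i0 ω)
      rw [hT', Finset.sum_apply]
      rw [← Finset.add_sum_erase _ _ (Finset.mem_univ i0)]
      ring
    have hae2 := hadd.prod_right_ae
    obtain ⟨t, ht⟩ := hae2.exists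
    have hid : Integrable (fun y : ℝ => y) (P.map (fun ω => ℓ wstar (Z i0 ω))) := by
      have h6 := ht.sub (integrable_const t)
      refine h6.congr (Filter.Eventually.of_forall fun y => by simp)
    have hY0 : Integrable (fun ω => ℓ wstar (Z i0 ω)) P :=
      (integrable_map_measure measurable_id.aestronglyMeasurable
        (hYmeas i0).aemeasurable).mp hid
    apply hints
    have h7 := (integrable_map_measure hℓstarMeas.aestronglyMeasurable
      (hZmeas i0).aemeasurable).mpr hY0
    rwa [hZlaw i0] at h7
end

section
/- Assume the learning tuple satisfies the expected (η, c)-central condition for some η > 0 and 0 < c ≤ 1, i.e. log E_{P_W ⊗ μ}[exp(−η r(W', Z'))] ≤ −c η E_{P_W ⊗ μ}[r(W', Z')]. Then for every η' ∈ (0, η], the expected excess risk satisfies E[ℛ(W)] ≤ (1/c) · E[ℛ̂(W, Sₙ)] + (1/(c η' n)) Σ_{i=1}^n I(W; Zᵢ). -/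
open MeasureTheory ProbabilityTheory

section Aux
variable {α : Type*} [MeasurableSpace α]

lemma my_jensen_exp (μ : Measure α) [IsProbabilityMeasure μ]
    {f : α → ℝ} (hf : Integrable f μ) (hef : Integrable (fun x => Real.exp (f x)) μ) :
    ∫ x, f x ∂μ ≤ Real.log (∫ x, Real.exp (f x) ∂μ) := by
  have h : Real.exp (∫ x, f x ∂μ) ≤ ∫ x, Real.exp (f x) ∂μ :=
    convexOn_exp.map_integral_le Real.continuous_exp.continuousOn isClosed_univ
      (Filter.Eventually.of_forall fun x => Set.mem_univ _) hf hef
  calc ∫ x, f x ∂μ = Real.log (Real.exp (∫ x, f x ∂μ)) := (Real.log_exp _).symm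
    _ ≤ _ := Real.log_le_log (Real.exp_pos _) h

lemma my_kl_nonneg {P Q : Measure α} [IsProbabilityMeasure P] [IsProbabilityMeasure Q]
    (hPQ : P ≪ Q) (hint : Integrable (llr P Q) P) : 0 ≤ ∫ x, llr P Q x ∂P := by
  have he : (fun x => Real.exp (-llr P Q x)) =ᵐ[P] fun x => (Q.rnDeriv P x).toReal :=
    exp_neg_llr hPQ
  have hint2 : Integrable (fun x => Real.exp (-llr P Q x)) P :=
    (Measure.integrable_toReal_rnDeriv (μ := Q) (ν := P)).congr he.symm
  have h1 : ∫ x, -llr P Q x ∂P ≤ Real.log (∫ x, Real.exp (-llr P Q x) ∂P) :=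
    my_jensen_exp P hint.neg hint2
  have h2 : ∫ x, Real.exp (-llr P Q x) ∂P = ∫ x, (Q.rnDeriv P x).toReal ∂P :=
    integral_congr_ae he
  have h3 : ∫ x, (Q.rnDeriv P x).toReal ∂P ≤ 1 := by
    have := Measure.setIntegral_toReal_rnDeriv_le (μ := Q) (ν := P) (s := Set.univ)
      (measure_ne_top _ _)
    simpa using this
  have h4 : Real.log (∫ x, Real.exp (-llr P Q x) ∂P) ≤ 0 := by
    refine Real.log_nonpos (integral_nonneg fun x => (Real.exp_pos _).le) ?_
    rw [h2]; exact h3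
  rw [integral_neg] at h1
  linarith

lemma my_dv {P Q : Measure α} [IsProbabilityMeasure P] [IsProbabilityMeasure Q]
    (hPQ : P ≪ Q) (hllrI : Integrable (llr P Q) P)
    {f : α → ℝ} (hfP : Integrable f P) (hefQ : Integrable (fun x => Real.exp (f x)) Q) :
    ∫ x, f x ∂P ≤ ∫ x, llr P Q x ∂P + Real.log (∫ x, Real.exp (f x) ∂Q) := by
  have hQ' : IsProbabilityMeasure (Q.tilted f) := isProbabilityMeasure_tilted hefQ
  have hPQ' : P ≪ Q.tilted f := hPQ.trans (absolutelyContinuous_tilted hefQ)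
  have hint' : Integrable (llr P (Q.tilted f)) P :=
    integrable_llr_tilted_right hPQ hfP hllrI hefQ
  have h0 : 0 ≤ ∫ x, llr P (Q.tilted f) x ∂P := my_kl_nonneg hPQ' hint'
  rw [integral_llr_tilted_right hPQ hfP hefQ hllrI] at h0
  linarith

lemma my_pos_part_integrable {P Q : Measure α} [IsProbabilityMeasure P] [IsProbabilityMeasure Q]
    (hPQ : P ≪ Q) (hllrI : Integrable (llr P Q) P)
    {f : α → ℝ} (hf : Measurable f) (hefQ : Integrable (fun x => Real.exp (f x)) Q) :
    Integrable (fun x => max (f x) 0) P := by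
  set C : ℝ := ∫ x, llr P Q x ∂P + Real.log (∫ x, Real.exp (f x) ∂Q + 1) with hC
  have hmeas : ∀ M : ℕ, Measurable fun x => min (max (f x) 0) (M : ℝ) := fun M =>
    (hf.max measurable_const).min measurable_const
  have hfb : ∀ M : ℕ, Integrable (fun x => min (max (f x) 0) (M : ℝ)) P := by
    intro M
    refine Integrable.mono' (integrable_const (M : ℝ)) (hmeas M).aestronglyMeasurable ?_
    refine Filter.Eventually.of_forall fun x => ?_
    rw [Real.norm_eq_abs, abs_le]
    refine ⟨le_trans (by simp [neg_nonpos]) (le_min (le_max_right _ _) (Nat.cast_nonneg M)), min_le_right _ _⟩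
  have hexpb : ∀ M : ℕ, Integrable (fun x => Real.exp (min (max (f x) 0) (M : ℝ))) Q := by
    intro M
    refine Integrable.mono' (hefQ.add (integrable_const 1))
      ((Real.measurable_exp.comp (hmeas M)).aestronglyMeasurable) ?_
    refine Filter.Eventually.of_forall fun x => ?_
    rw [Real.norm_eq_abs, abs_of_nonneg (Real.exp_pos _).le]
    calc Real.exp (min (max (f x) 0) (M : ℝ)) ≤ Real.exp (max (f x) 0) :=
          Real.exp_le_exp.2 (min_le_left _ _)
      _ ≤ Real.exp (f x) + 1 := by
          rcases le_total (f x) 0 with h | h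
          · rw [max_eq_right h]; simpa using (Real.exp_pos (f x)).le
          · rw [max_eq_left h]; linarith [Real.exp_pos (f x)]
  have hbound : ∀ M : ℕ, ∫ x, min (max (f x) 0) (M : ℝ) ∂P ≤ C := by
    intro M
    have h1 := my_dv hPQ hllrI (hfb M) (hexpb M)
    have h2 : Real.log (∫ x, Real.exp (min (max (f x) 0) (M : ℝ)) ∂Q)
        ≤ Real.log (∫ x, Real.exp (f x) ∂Q + 1) := by
      refine Real.log_le_log (integral_exp_pos (hexpb M)) ?_
      have : ∫ x, Real.exp (f x) ∂Q + 1 = ∫ x, (Real.exp (f x) + 1) ∂Q := by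
        rw [integral_add hefQ (integrable_const 1)]; simp
      rw [this]
      refine integral_mono (hexpb M) (hefQ.add (integrable_const 1)) fun x => ?_
      calc Real.exp (min (max (f x) 0) (M : ℝ)) ≤ Real.exp (max (f x) 0) :=
            Real.exp_le_exp.2 (min_le_left _ _)
        _ ≤ Real.exp (f x) + 1 := by
            rcases le_total (f x) 0 with h | h
            · rw [max_eq_right h]; simpa using (Real.exp_pos (f x)).le
            · rw [max_eq_left h]; linarith [Real.exp_pos (f x)]
    calc ∫ x, min (max (f x) 0) (M : ℝ) ∂P ≤ _ := h1
      _ ≤ C := by rw [hC]; linarith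
  -- C ≥ 0 since at M = 0 the integral is 0
  have hC0 : 0 ≤ C := by
    have := hbound 0
    simpa using this
  refine ⟨(hf.max measurable_const).aestronglyMeasurable,
    (hasFiniteIntegral_iff_ofReal
      (Filter.Eventually.of_forall fun x => le_max_right (f x) 0)).2 ?_⟩
  have hsup : ∀ x, ENNReal.ofReal (max (f x) 0)
      = ⨆ M : ℕ, ENNReal.ofReal (min (max (f x) 0) (M : ℝ)) := by
    intro x
    refine le_antisymm ?_ (iSup_le fun M => ENNReal.ofReal_le_ofReal (min_le_left _ _))
    refine le_iSup_of_le ⌈max (f x) 0⌉₊ ?_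
    rw [min_eq_left (Nat.le_ceil _)]
  calc ∫⁻ x, ENNReal.ofReal (max (f x) 0) ∂P
      = ∫⁻ x, ⨆ M : ℕ, ENNReal.ofReal (min (max (f x) 0) (M : ℝ)) ∂P := by
        simp_rw [hsup]
    _ = ⨆ M : ℕ, ∫⁻ x, ENNReal.ofReal (min (max (f x) 0) (M : ℝ)) ∂P := by
        refine lintegral_iSup (fun M => (ENNReal.measurable_ofReal.comp (hmeas M))) ?_
        intro M N hMN x
        exact ENNReal.ofReal_le_ofReal (min_le_min le_rfl (Nat.cast_le.2 hMN))
    _ ≤ ENNReal.ofReal C := by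
        refine iSup_le fun M => ?_
        rw [← ofReal_integral_eq_lintegral_ofReal (hfb M)
          (Filter.Eventually.of_forall fun x =>
            le_min (le_max_right _ _) (Nat.cast_nonneg M))]
        exact ENNReal.ofReal_le_ofReal (hbound M)
    _ < ⊤ := ENNReal.ofReal_lt_top

lemma my_central_mono (Q : Measure α) [IsProbabilityMeasure Q]
    {g : α → ℝ} {η η' c E : ℝ} (hη : 0 < η) (hη'0 : 0 < η') (hη'η : η' ≤ η)
    (hIη : Integrable (fun x => Real.exp (-η * g x)) Q)
    (hIη' : Integrable (fun x => Real.exp (-η' * g x)) Q)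
    (hcentral : Real.log (∫ x, Real.exp (-η * g x) ∂Q) ≤ -c * η * E) :
    Real.log (∫ x, Real.exp (-η' * g x) ∂Q) ≤ -c * η' * E := by
  rcases eq_or_lt_of_le hη'η with rfl | hlt
  · exact hcentral
  · set θ : ℝ := η' / η with hθ
    have hθ0 : 0 < θ := div_pos hη'0 hη
    have hθ1 : θ ≤ 1 := le_of_lt ((div_lt_one hη).2 hlt)
    have hpt : ∀ x, Real.exp (-η' * g x) = Real.exp (-η * g x) ^ θ := by
      intro x
      rw [← Real.exp_mul]
      congr 1
      field_simp [hθ]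
      rw [hθ]; field_simp
    have hjen : ∫ x, Real.exp (-η * g x) ^ θ ∂Q ≤ (∫ x, Real.exp (-η * g x) ∂Q) ^ θ := by
      have := (Real.concaveOn_rpow hθ0.le hθ1).le_map_integral
        (Real.continuous_rpow_const hθ0.le).continuousOn isClosed_Ici
        (Filter.Eventually.of_forall fun x => (Real.exp_pos _).le) hIη ?_
      · exact this
      · refine (hIη'.congr (Filter.Eventually.of_forall fun x => ?_))
        show Real.exp (-η' * g x) = Real.exp (-η * g x) ^ θ
        exact hpt x
    have hpos' : 0 < ∫ x, Real.exp (-η' * g x) ∂Q := integral_exp_pos hIη'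
    have hpos : 0 < ∫ x, Real.exp (-η * g x) ∂Q := integral_exp_pos hIη
    calc Real.log (∫ x, Real.exp (-η' * g x) ∂Q)
        ≤ Real.log ((∫ x, Real.exp (-η * g x) ∂Q) ^ θ) := by
          refine Real.log_le_log hpos' ?_
          refine le_trans (le_of_eq ?_) hjen
          exact integral_congr_ae (Filter.Eventually.of_forall hpt)
      _ = θ * Real.log (∫ x, Real.exp (-η * g x) ∂Q) := Real.log_rpow hpos θ
      _ ≤ θ * (-c * η * E) := by
          exact mul_le_mul_of_nonneg_left hcentral hθ0.le
      _ = -c * η' * E := by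
          rw [hθ]; field_simp

end Aux

/-- **Theorem 4 (fast rate with the `(η, c)`-central condition, excess risk).** -/
theorem eta_c_central_excess_risk_bound
    {Ω 𝒲 𝒵 : Type*} [MeasurableSpace Ω] [MeasurableSpace 𝒲] [MeasurableSpace 𝒵]
    (P : Measure Ω) [IsProbabilityMeasure P]
    (μ : Measure 𝒵) [IsProbabilityMeasure μ]
    (ℓ : 𝒲 → 𝒵 → ℝ) (hℓ : Measurable (Function.uncurry ℓ))
    (n : ℕ) (hn : 0 < n)
    (Z : Fin n → Ω → 𝒵) (hZmeas : ∀ i, Measurable (Z i))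
    (hZlaw : ∀ i, P.map (Z i) = μ)
    (hindep : iIndepFun Z P)
    (W : Ω → 𝒲) (hW : Measurable W)
    (wstar : 𝒲) (hwstar : ∀ w, ∫ z, ℓ wstar z ∂μ ≤ ∫ z, ℓ w z ∂μ)
    (r : 𝒲 → 𝒵 → ℝ) (hr : r = fun w z => ℓ w z - ℓ wstar z)
    (η c : ℝ) (hη : 0 < η) (hc : 0 < c) (hc1 : c ≤ 1)
    -- all expectations appearing are finite
    (hrInt : Integrable (fun p : 𝒲 × 𝒵 => r p.1 p.2) ((P.map W).prod μ))
    (hexpInt : ∀ η' : ℝ, 0 < η' → η' ≤ η →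
      Integrable (fun p : 𝒲 × 𝒵 => Real.exp (-η' * r p.1 p.2)) ((P.map W).prod μ))
    (hRiskInt : Integrable (fun ω => ∫ z, r (W ω) z ∂μ) P)
    (hEmpInt : Integrable (fun ω => (n : ℝ)⁻¹ * ∑ i, r (W ω) (Z i ω)) P)
    (hac : ∀ i, P.map (fun ω => (W ω, Z i ω)) ≪ (P.map W).prod μ)
    (hllr : ∀ i, Integrable (llr (P.map (fun ω => (W ω, Z i ω))) ((P.map W).prod μ))
        (P.map (fun ω => (W ω, Z i ω))))
    -- expected `(η, c)`-central condition
    (hcentral : Real.log (∫ p, Real.exp (-η * r p.1 p.2) ∂((P.map W).prod μ))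
      ≤ -c * η * ∫ p, r p.1 p.2 ∂((P.map W).prod μ)) :
    ∀ η' : ℝ, 0 < η' → η' ≤ η →
    ∫ ω, (∫ z, r (W ω) z ∂μ) ∂P
      ≤ (1 / c) * (∫ ω, (n : ℝ)⁻¹ * ∑ i, r (W ω) (Z i ω) ∂P)
        + (1 / (c * η' * n)) * ∑ i,
            klDivR (P.map (fun ω => (W ω, Z i ω))) ((P.map W).prod μ) := by
  intro η' hη'0 hη'η
  have hnR : (0:ℝ) < n := Nat.cast_pos.2 hn
  -- basic measurability
  have rmeas : Measurable (fun p : 𝒲 × 𝒵 => r p.1 p.2) := by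
    subst hr
    exact hℓ.sub (hℓ.comp (measurable_const.prodMk measurable_snd))
  have hPW : IsProbabilityMeasure (P.map W) := Measure.isProbabilityMeasure_map hW.aemeasurable
  set Q : Measure (𝒲 × 𝒵) := (P.map W).prod μ with hQ
  have hm : ∀ i, Measurable (fun ω => (W ω, Z i ω)) := fun i => hW.prodMk (hZmeas i)
  have hPi : ∀ i, IsProbabilityMeasure (P.map (fun ω => (W ω, Z i ω))) := fun i =>
    Measure.isProbabilityMeasure_map (hm i).aemeasurable
  set ER : ℝ := ∫ p, r p.1 p.2 ∂Q with hER
  -- the central condition at η'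
  have hcen' : Real.log (∫ p, Real.exp (-η' * r p.1 p.2) ∂Q) ≤ -c * η' * ER :=
    my_central_mono Q hη hη'0 hη'η (hexpInt η hη le_rfl) (hexpInt η' hη'0 hη'η) hcentral
  -- integrability of the negative parts
  have hnegQ : ∀ i, Integrable
      (fun ω => max (-η' * r (W ω) (Z i ω)) 0) P := by
    intro i
    have hposQ : Integrable (fun p : 𝒲 × 𝒵 => max (-η' * r p.1 p.2) 0)
        (P.map (fun ω => (W ω, Z i ω))) := by
      have := hPi i
      exact my_pos_part_integrable (hac i) (hllr i) (rmeas.const_mul (-η'))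
        (hexpInt η' hη'0 hη'η)
    exact (integrable_map_measure
      ((rmeas.const_mul _).max measurable_const).aestronglyMeasurable
      (hm i).aemeasurable).1 hposQ
  have hneg : ∀ i, Integrable (fun ω => max (-(r (W ω) (Z i ω))) 0) P := by
    intro i
    have h := (hnegQ i).const_mul (1/η')
    refine h.congr (Filter.Eventually.of_forall fun ω => ?_)
    show 1/η' * max (-η' * r (W ω) (Z i ω)) 0 = max (-(r (W ω) (Z i ω))) 0
    rw [mul_max_of_nonneg _ _ (by positivity : (0:ℝ) ≤ 1/η'), mul_zero]
    congr 1
    field_simp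
  -- integrability of each individual term
  have hS : Integrable (fun ω => ∑ i, r (W ω) (Z i ω)) P := by
    have h := hEmpInt.const_mul (n : ℝ)
    refine h.congr (Filter.Eventually.of_forall fun ω => ?_)
    field_simp
  have hnegsum : Integrable (fun ω => ∑ j, max (-(r (W ω) (Z j ω))) 0) P :=
    integrable_finset_sum _ fun j _ => hneg j
  have hri : ∀ i, Integrable (fun ω => r (W ω) (Z i ω)) P := by
    intro i
    refine Integrable.mono' (hS.abs.add hnegsum)
      ((rmeas.comp (hm i)).aestronglyMeasurable) ?_
    refine Filter.Eventually.of_forall fun ω => ?_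
    simp only [Pi.add_apply]
    rw [Real.norm_eq_abs, abs_le]
    constructor
    · have h1 : -(r (W ω) (Z i ω)) ≤ ∑ j, max (-(r (W ω) (Z j ω))) 0 := by
        exact le_trans (le_max_left (-(r (W ω) (Z i ω))) 0)
          (Finset.single_le_sum (f := fun j => max (-(r (W ω) (Z j ω))) 0)
            (fun j _ => le_max_right _ _) (Finset.mem_univ i))
      have h2 : (0:ℝ) ≤ |∑ j, r (W ω) (Z j ω)| := abs_nonneg _
      linarith
    · have h1 : r (W ω) (Z i ω)
          = (∑ j, r (W ω) (Z j ω)) - ∑ j ∈ Finset.univ.erase i, r (W ω) (Z j ω) := by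
        rw [← Finset.add_sum_erase _ _ (Finset.mem_univ i)]; ring
      have h2 : -∑ j ∈ Finset.univ.erase i, r (W ω) (Z j ω)
          ≤ ∑ j, max (-(r (W ω) (Z j ω))) 0 := by
        rw [← Finset.sum_neg_distrib]
        refine le_trans (Finset.sum_le_sum (g := fun j => max (-(r (W ω) (Z j ω))) 0)
          fun j _ => le_max_left _ _) ?_
        exact Finset.sum_le_sum_of_subset_of_nonneg (Finset.erase_subset _ _)
          (fun j _ _ => le_max_right _ _)
      have h3 : ∑ j, r (W ω) (Z j ω) ≤ |∑ j, r (W ω) (Z j ω)| := le_abs_self _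
      linarith
  -- Donsker–Varadhan applied to each coordinate
  have key : ∀ i, c * η' * ER ≤
      klDivR (P.map (fun ω => (W ω, Z i ω))) Q + η' * ∫ ω, r (W ω) (Z i ω) ∂P := by
    intro i
    have := hPi i
    have hEi : ∫ p, r p.1 p.2 ∂(P.map (fun ω => (W ω, Z i ω))) = ∫ ω, r (W ω) (Z i ω) ∂P :=
      integral_map (hm i).aemeasurable rmeas.aestronglyMeasurable
    have hfPi : Integrable (fun p : 𝒲 × 𝒵 => -η' * r p.1 p.2)
        (P.map (fun ω => (W ω, Z i ω))) := by
      refine (integrable_map_measure (rmeas.const_mul (-η')).aestronglyMeasurable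
        (hm i).aemeasurable).2 ?_
      exact (hri i).const_mul (-η')
    have hdv := my_dv (hac i) (hllr i) hfPi (hexpInt η' hη'0 hη'η)
    rw [integral_const_mul, hEi] at hdv
    simp only [klDivR]
    linarith [hcen', hdv]
  -- sum the per-coordinate bounds
  have hsum : (n : ℝ) * (c * η' * ER)
      ≤ (∑ i, klDivR (P.map (fun ω => (W ω, Z i ω))) Q)
        + η' * ∑ i, ∫ ω, r (W ω) (Z i ω) ∂P := by
    calc (n : ℝ) * (c * η' * ER) = ∑ _i : Fin n, c * η' * ER := by
          rw [Finset.sum_const, Finset.card_univ, Fintype.card_fin, nsmul_eq_mul]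
      _ ≤ ∑ i, (klDivR (P.map (fun ω => (W ω, Z i ω))) Q
            + η' * ∫ ω, r (W ω) (Z i ω) ∂P) := Finset.sum_le_sum fun i _ => key i
      _ = _ := by rw [Finset.sum_add_distrib, ← Finset.mul_sum]
  -- identify the goal quantities
  have hLHS : ∫ ω, (∫ z, r (W ω) z ∂μ) ∂P = ER := by
    rw [hER, hQ, integral_prod _ hrInt,
      integral_map hW.aemeasurable
        ((rmeas.stronglyMeasurable.integral_prod_right' (ν := μ))).aestronglyMeasurable]
  have hEmp : ∫ ω, (n : ℝ)⁻¹ * ∑ i, r (W ω) (Z i ω) ∂P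
      = (n : ℝ)⁻¹ * ∑ i, ∫ ω, r (W ω) (Z i ω) ∂P := by
    rw [integral_const_mul, integral_finset_sum _ fun i _ => hri i]
  rw [hLHS, hEmp]
  set K : ℝ := ∑ i, klDivR (P.map (fun ω => (W ω, Z i ω))) Q with hK
  set T : ℝ := ∑ i, ∫ ω, r (W ω) (Z i ω) ∂P with hT
  have hd : (0:ℝ) < c * η' * n := by positivity
  have h1 : ER ≤ (K + η' * T) / (c * η' * n) := by
    rw [le_div_iff₀ hd]
    nlinarith [hsum]
  calc ER ≤ (K + η' * T) / (c * η' * n) := h1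
    _ = 1 / c * ((n : ℝ)⁻¹ * T) + 1 / (c * η' * n) * K := by
        field_simp
        ring
end

section
/- Let v : [0, ∞) → [0, ∞) be a bounded non-decreasing function with v(ε) > 0 for all ε > 0, and assume the learning tuple satisfies the (v, c)-central condition with 0 < c < 1: for all ε ≥ 0, log E_{P_W ⊗ μ}[exp(−v(ε) r(W', Z'))] ≤ −c v(ε) E_{P_W ⊗ μ}[r(W', Z')] + v(ε) ε. Then for every ε ≥ 0 and every η' with 0 < η' ≤ v(ε): E[ℰ(W, Sₙ)] ≤ ((1 − c)/c) · E[ℛ̂(W, Sₙ)] + (1/n) Σ_{i=1}^n ( I(W; Zᵢ)/(η' c) + ε/c ). -/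
open MeasureTheory ProbabilityTheory

section AuxLemmas

variable {α : Type*} [MeasurableSpace α] {μ ν : Measure α}

lemma young_aux_s9 (t s : ℝ) (ht : 0 ≤ t) : t * s ≤ t * Real.log t - t + Real.exp s := by
  rcases eq_or_lt_of_le ht with h | h
  · simp only [← h, zero_mul, sub_zero, zero_add]
    positivity
  · have h1 : s - Real.log t + 1 ≤ Real.exp (s - Real.log t) :=
      Real.add_one_le_exp _
    have h2 : t * (s - Real.log t + 1) ≤ t * Real.exp (s - Real.log t) :=
      mul_le_mul_of_nonneg_left h1 ht
    rw [Real.exp_sub, Real.exp_log h] at h2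
    have h3 : t * (Real.exp s / t) = Real.exp s := by field_simp
    nlinarith [h2, h3]

lemma gibbs_nonneg [IsProbabilityMeasure μ] [IsProbabilityMeasure ν] (hμν : μ ≪ ν)
    (h : Integrable (llr μ ν) μ) : 0 ≤ ∫ x, llr μ ν x ∂μ := by
  set g : α → ℝ := fun x => (μ.rnDeriv ν x).toReal with hg
  have hgint : Integrable g ν := Measure.integrable_toReal_rnDeriv
  have hgone : ∫ x, g x ∂ν = 1 := by
    rw [hg, Measure.integral_toReal_rnDeriv hμν]
    simp
  have hsmul : Integrable (fun x => g x * llr μ ν x) ν := by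
    have := (integrable_rnDeriv_smul_iff (f := llr μ ν) hμν).mpr h
    simpa [smul_eq_mul] using this
  have hchg : ∫ x, llr μ ν x ∂μ = ∫ x, g x * llr μ ν x ∂ν := by
    rw [← integral_rnDeriv_smul hμν (f := llr μ ν)]
    simp [smul_eq_mul]; rfl
  have hjen := Real.convexOn_mul_log.map_integral_le (μ := ν) (f := g)
      Real.continuous_mul_log.continuousOn isClosed_Ici
      (Filter.Eventually.of_forall fun x => Set.mem_Ici.mpr ENNReal.toReal_nonneg) hgint ?_
  · rw [hgone] at hjen
    simp only [Real.log_one, mul_zero] at hjen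
    rw [hchg]
    exact hjen
  · exact hsmul

lemma dv_bound_s9 [IsProbabilityMeasure μ] [IsProbabilityMeasure ν] (hμν : μ ≪ ν)
    {f : α → ℝ} (hf : Integrable f μ) (hef : Integrable (fun x => Real.exp (f x)) ν)
    (h : Integrable (llr μ ν) μ) :
    ∫ x, f x ∂μ ≤ (∫ x, llr μ ν x ∂μ) + Real.log (∫ x, Real.exp (f x) ∂ν) := by
  haveI : IsProbabilityMeasure (ν.tilted f) := isProbabilityMeasure_tilted hef
  have hμν' : μ ≪ ν.tilted f := hμν.trans (absolutelyContinuous_tilted hef)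
  have hint : Integrable (llr μ (ν.tilted f)) μ := integrable_llr_tilted_right hμν hf h hef
  have h0 : 0 ≤ ∫ x, llr μ (ν.tilted f) x ∂μ := gibbs_nonneg hμν' hint
  rw [integral_llr_tilted_right hμν hf hef h] at h0
  linarith

end AuxLemmas

/-- **Theorem 5 (intermediate rate with the `(v, c)`-central condition).** -/
theorem v_c_central_generalization_bound
    {Ω 𝒲 𝒵 : Type*} [MeasurableSpace Ω] [MeasurableSpace 𝒲] [MeasurableSpace 𝒵]
    (P : Measure Ω) [IsProbabilityMeasure P]
    (μ : Measure 𝒵) [IsProbabilityMeasure μ]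
    (ℓ : 𝒲 → 𝒵 → ℝ) (hℓ : Measurable (Function.uncurry ℓ))
    (n : ℕ) (hn : 0 < n)
    (Z : Fin n → Ω → 𝒵) (hZmeas : ∀ i, Measurable (Z i))
    (hZlaw : ∀ i, P.map (Z i) = μ)
    (hindep : iIndepFun Z P)
    (W : Ω → 𝒲) (hW : Measurable W)
    (wstar : 𝒲) (hwstar : ∀ w, ∫ z, ℓ wstar z ∂μ ≤ ∫ z, ℓ w z ∂μ)
    (r : 𝒲 → 𝒵 → ℝ) (hr : r = fun w z => ℓ w z - ℓ wstar z)
    (c : ℝ) (hc : 0 < c) (hc1 : c < 1)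
    -- `v` is a bounded non-decreasing function on `[0, ∞)`, positive on `(0, ∞)`
    (v : ℝ → ℝ) (hvnonneg : ∀ ε, 0 ≤ ε → 0 ≤ v ε)
    (hvmono : ∀ ε₁ ε₂, 0 ≤ ε₁ → ε₁ ≤ ε₂ → v ε₁ ≤ v ε₂)
    (hvbdd : ∃ M : ℝ, ∀ ε, 0 ≤ ε → v ε ≤ M)
    (hvpos : ∀ ε, 0 < ε → 0 < v ε)
    -- all expectations appearing are finite
    (hrInt : Integrable (fun p : 𝒲 × 𝒵 => r p.1 p.2) ((P.map W).prod μ))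
    (hexpInt : ∀ η' : ℝ, 0 < η' →
      Integrable (fun p : 𝒲 × 𝒵 => Real.exp (-η' * r p.1 p.2)) ((P.map W).prod μ))
    (hgenInt : Integrable
      (fun ω => (∫ z, ℓ (W ω) z ∂μ) - (n : ℝ)⁻¹ * ∑ i, ℓ (W ω) (Z i ω)) P)
    (hEmpInt : Integrable (fun ω => (n : ℝ)⁻¹ * ∑ i, r (W ω) (Z i ω)) P)
    (hac : ∀ i, P.map (fun ω => (W ω, Z i ω)) ≪ (P.map W).prod μ)
    (hllr : ∀ i, Integrable (llr (P.map (fun ω => (W ω, Z i ω))) ((P.map W).prod μ))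
        (P.map (fun ω => (W ω, Z i ω))))
    -- the `(v, c)`-central condition
    (hcentral : ∀ ε : ℝ, 0 ≤ ε →
      Real.log (∫ p, Real.exp (-(v ε) * r p.1 p.2) ∂((P.map W).prod μ))
        ≤ -c * v ε * (∫ p, r p.1 p.2 ∂((P.map W).prod μ)) + v ε * ε) :
    ∀ ε : ℝ, 0 ≤ ε → ∀ η' : ℝ, 0 < η' → η' ≤ v ε →
    ∫ ω, ((∫ z, ℓ (W ω) z ∂μ) - (n : ℝ)⁻¹ * ∑ i, ℓ (W ω) (Z i ω)) ∂P
      ≤ (1 - c) / c * (∫ ω, (n : ℝ)⁻¹ * ∑ i, r (W ω) (Z i ω) ∂P)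
        + (n : ℝ)⁻¹ * ∑ i,
            (klDivR (P.map (fun ω => (W ω, Z i ω))) ((P.map W).prod μ) / (η' * c) + ε / c) := by
  intro ε hε η' hη'pos hη'le
  have hn0 : (n : ℝ) ≠ 0 := Nat.cast_ne_zero.mpr hn.ne'
  have hvε : 0 < v ε := lt_of_lt_of_le hη'pos hη'le
  haveI hPW : IsProbabilityMeasure (P.map W) := Measure.isProbabilityMeasure_map hW.aemeasurable
  haveI : IsProbabilityMeasure ((P.map W).prod μ) := by infer_instance
  have hpair : ∀ i : Fin n, Measurable fun ω => (W ω, Z i ω) := fun i => hW.prodMk (hZmeas i)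
  have hprob : ∀ i : Fin n, IsProbabilityMeasure (P.map fun ω => (W ω, Z i ω)) :=
    fun i => Measure.isProbabilityMeasure_map (hpair i).aemeasurable
  have hRmeas : Measurable fun p : 𝒲 × 𝒵 => r p.1 p.2 := by
    have hre : (fun p : 𝒲 × 𝒵 => r p.1 p.2)
        = fun p : 𝒲 × 𝒵 => Function.uncurry ℓ p - Function.uncurry ℓ (wstar, p.2) := by
      funext p; simp [hr, Function.uncurry]
    rw [hre]
    exact hℓ.sub (hℓ.comp (measurable_const.prodMk measurable_snd))
  have hℓwmeas : Measurable (ℓ wstar) := hℓ.comp measurable_prodMk_left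
  -- abbreviation
  set π : Measure (𝒲 × 𝒵) := (P.map W).prod μ with hπdef
  set Er : ℝ := ∫ p, r p.1 p.2 ∂π with hErdef
  -- Step A : the log-mgf bound at η'
  have hψ : Real.log (∫ p, Real.exp (-η' * r p.1 p.2) ∂π) ≤ η' * (-c * Er + ε) := by
    rcases eq_or_lt_of_le hη'le with hcase | hcase
    · calc Real.log (∫ p, Real.exp (-η' * r p.1 p.2) ∂π)
          = Real.log (∫ p, Real.exp (-(v ε) * r p.1 p.2) ∂π) := by rw [hcase]
        _ ≤ -c * v ε * Er + v ε * ε := hcentral ε hε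
        _ = η' * (-c * Er + ε) := by rw [hcase]; ring
    · set θ : ℝ := η' / v ε with hθdef
      have hθpos : 0 < θ := div_pos hη'pos hvε
      have hθle : θ ≤ 1 := by rw [hθdef, div_le_one hvε]; exact hη'le
      have hXeq : ∀ p : 𝒲 × 𝒵,
          Real.exp (-η' * r p.1 p.2) = (Real.exp (-(v ε) * r p.1 p.2)) ^ θ := by
        intro p
        rw [← Real.exp_mul]
        congr 1
        rw [hθdef]
        field_simp
      have hjen : ∫ p, (Real.exp (-(v ε) * r p.1 p.2)) ^ θ ∂π
          ≤ (∫ p, Real.exp (-(v ε) * r p.1 p.2) ∂π) ^ θ := by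
        refine (Real.concaveOn_rpow hθpos.le hθle).le_map_integral
          (Real.continuous_rpow_const hθpos.le).continuousOn isClosed_Ici
          (Filter.Eventually.of_forall fun p => Set.mem_Ici.mpr (Real.exp_pos _).le)
          (hexpInt (v ε) hvε) ?_
        have he : ((fun x : ℝ => x ^ θ) ∘ fun p : 𝒲 × 𝒵 => Real.exp (-(v ε) * r p.1 p.2))
            = fun p : 𝒲 × 𝒵 => Real.exp (-η' * r p.1 p.2) := by
          funext p
          simp only [Function.comp_apply]
          exact (hXeq p).symm
        rw [he]
        exact hexpInt η' hη'pos
      have hpos1 : 0 < ∫ p, Real.exp (-η' * r p.1 p.2) ∂π :=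
        integral_exp_pos (hexpInt η' hη'pos)
      have hpos2 : 0 < ∫ p, Real.exp (-(v ε) * r p.1 p.2) ∂π :=
        integral_exp_pos (hexpInt (v ε) hvε)
      have hstep : ∫ p, Real.exp (-η' * r p.1 p.2) ∂π
          ≤ (∫ p, Real.exp (-(v ε) * r p.1 p.2) ∂π) ^ θ := by
        calc ∫ p, Real.exp (-η' * r p.1 p.2) ∂π
            = ∫ p, (Real.exp (-(v ε) * r p.1 p.2)) ^ θ ∂π := by
              apply integral_congr_ae
              exact Filter.Eventually.of_forall fun p => hXeq p
          _ ≤ _ := hjen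
      calc Real.log (∫ p, Real.exp (-η' * r p.1 p.2) ∂π)
          ≤ Real.log ((∫ p, Real.exp (-(v ε) * r p.1 p.2) ∂π) ^ θ) :=
            Real.log_le_log hpos1 hstep
        _ = θ * Real.log (∫ p, Real.exp (-(v ε) * r p.1 p.2) ∂π) := Real.log_rpow hpos2 θ
        _ ≤ θ * (-c * v ε * Er + v ε * ε) :=
            mul_le_mul_of_nonneg_left (hcentral ε hε) hθpos.le
        _ = η' * (-c * Er + ε) := by
            rw [hθdef]; field_simp
  -- Step B : integrability of the negative parts of r (W ω) (Z i ω)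
  have hneg : ∀ i : Fin n, Integrable (fun ω => max (-(r (W ω) (Z i ω))) 0) P := by
    intro i
    haveI := hprob i
    set μi : Measure (𝒲 × 𝒵) := P.map fun ω => (W ω, Z i ω) with hμidef
    set g : 𝒲 × 𝒵 → ℝ := fun p => (μi.rnDeriv π p).toReal with hgdef
    have hgmeas : Measurable g := (Measure.measurable_rnDeriv μi π).ennreal_toReal
    have hglog : Integrable (fun p => g p * Real.log (g p)) π := by
      have := (integrable_rnDeriv_smul_iff (f := llr μi π) (hac i)).mpr (hllr i)
      simp only [smul_eq_mul] at this; exact this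
    have hgint : Integrable g π := Measure.integrable_toReal_rnDeriv
    have hB : Integrable (fun p : 𝒲 × 𝒵 =>
        g p * Real.log (g p) - g p + Real.exp (-η' * r p.1 p.2) + 1) π :=
      ((hglog.sub hgint).add (hexpInt η' hη'pos)).add (integrable_const 1)
    have hmax_meas : Measurable fun p : 𝒲 × 𝒵 => max (-η' * r p.1 p.2) 0 :=
      (hRmeas.const_mul (-η')).max measurable_const
    have hsmulmax : Integrable (fun p : 𝒲 × 𝒵 => g p * max (-η' * r p.1 p.2) 0) π := by
      refine hB.mono' ((hgmeas.mul hmax_meas).aestronglyMeasurable) ?_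
      refine Filter.Eventually.of_forall fun p => ?_
      have h0 : 0 ≤ g p * max (-η' * r p.1 p.2) 0 :=
        mul_nonneg ENNReal.toReal_nonneg (le_max_right _ _)
      rw [Real.norm_eq_abs, abs_of_nonneg h0]
      have hy := young_aux_s9 (g p) (max (-η' * r p.1 p.2) 0) ENNReal.toReal_nonneg
      have hexpmax : Real.exp (max (-η' * r p.1 p.2) 0) ≤ Real.exp (-η' * r p.1 p.2) + 1 := by
        rcases max_cases (-η' * r p.1 p.2) 0 with ⟨hm, _⟩ | ⟨hm, _⟩ <;> rw [hm]
        · linarith [Real.exp_pos (0 : ℝ)]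
        · simp only [Real.exp_zero]
          linarith [Real.exp_pos (-η' * r p.1 p.2)]
      linarith
    have hμimax : Integrable (fun p : 𝒲 × 𝒵 => max (-η' * r p.1 p.2) 0) μi := by
      refine (integrable_rnDeriv_smul_iff (hac i)).mp ?_
      simpa [smul_eq_mul] using hsmulmax
    have hμimax' : Integrable (fun p : 𝒲 × 𝒵 => max (-(r p.1 p.2)) 0) μi := by
      have := hμimax.const_mul η'⁻¹
      have he : (fun p : 𝒲 × 𝒵 => η'⁻¹ * max (-η' * r p.1 p.2) 0)
          = fun p : 𝒲 × 𝒵 => max (-(r p.1 p.2)) 0 := by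
        funext p
        rcases le_total (r p.1 p.2) 0 with h | h
        · rw [max_eq_left (by nlinarith : (0:ℝ) ≤ -η' * r p.1 p.2),
            max_eq_left (by linarith : (0:ℝ) ≤ -(r p.1 p.2))]
          field_simp
        · rw [max_eq_right (by nlinarith : -η' * r p.1 p.2 ≤ (0:ℝ)), mul_zero,
            max_eq_right (by linarith : -(r p.1 p.2) ≤ (0:ℝ))]
      rwa [he] at this
    have := (integrable_map_measure
      (((hRmeas.neg).max measurable_const).aestronglyMeasurable)
      (hpair i).aemeasurable).mp (by rwa [← hμidef])
    exact this
  -- sum of r (W ω) (Z i ω) is integrable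
  have hSint : Integrable (fun ω => ∑ i, r (W ω) (Z i ω)) P := by
    have := hEmpInt.const_mul (n : ℝ)
    have he : (fun ω => (n : ℝ) * ((n : ℝ)⁻¹ * ∑ i, r (W ω) (Z i ω)))
        = fun ω => ∑ i, r (W ω) (Z i ω) := by
      funext ω; rw [← mul_assoc, mul_inv_cancel₀ hn0, one_mul]
    rwa [he] at this
  -- per-i integrability of r (W ω) (Z i ω)
  have hri : ∀ i : Fin n, Integrable (fun ω => r (W ω) (Z i ω)) P := by
    intro i
    have hBnd : Integrable (fun ω =>
        |∑ j, r (W ω) (Z j ω)| + ∑ j, max (-(r (W ω) (Z j ω))) 0) P :=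
      hSint.abs.add (integrable_finset_sum _ fun j _ => hneg j)
    refine hBnd.mono' ?_ (Filter.Eventually.of_forall fun ω => ?_)
    · exact (hRmeas.comp (hpair i)).aestronglyMeasurable
    · rw [Real.norm_eq_abs, abs_le]
      constructor
      · have h1 : max (-(r (W ω) (Z i ω))) 0 ≤ ∑ j, max (-(r (W ω) (Z j ω))) 0 :=
          Finset.single_le_sum (f := fun j => max (-(r (W ω) (Z j ω))) 0)
            (fun j _ => le_max_right _ _) (Finset.mem_univ i)
        have h2 : -(r (W ω) (Z i ω)) ≤ max (-(r (W ω) (Z i ω))) 0 := le_max_left _ _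
        have h3 : (0:ℝ) ≤ |∑ j, r (W ω) (Z j ω)| := abs_nonneg _
        linarith
      · have hsplit : r (W ω) (Z i ω)
            = (∑ j, r (W ω) (Z j ω)) - ∑ j ∈ Finset.univ.erase i, r (W ω) (Z j ω) := by
          rw [← Finset.add_sum_erase _ _ (Finset.mem_univ i)]; ring
        have h4 : -(∑ j ∈ Finset.univ.erase i, r (W ω) (Z j ω))
            ≤ ∑ j ∈ Finset.univ.erase i, max (-(r (W ω) (Z j ω))) 0 := by
          rw [← Finset.sum_neg_distrib]
          exact Finset.sum_le_sum fun j _ => le_max_left _ _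
        have h5 : ∑ j ∈ Finset.univ.erase i, max (-(r (W ω) (Z j ω))) 0
            ≤ ∑ j, max (-(r (W ω) (Z j ω))) 0 := by
          refine Finset.sum_le_sum_of_subset_of_nonneg (Finset.erase_subset _ _)
            fun j _ _ => le_max_right _ _
        have h6 : ∑ j, r (W ω) (Z j ω) ≤ |∑ j, r (W ω) (Z j ω)| := le_abs_self _
        linarith
  -- integrability of ℓ wstar (via independence, by contradiction)
  have hL : Integrable (fun z => ℓ wstar z) μ := by
    by_contra hLn
    have hae1 : ∀ᵐ ω ∂P, Integrable (fun z => r (W ω) z) μ :=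
      ae_of_ae_map hW.aemeasurable hrInt.prod_right_ae
    have hae2 : ∀ᵐ ω ∂P, (∫ z, ℓ (W ω) z ∂μ) = 0 := by
      filter_upwards [hae1] with ω hω
      refine integral_undef fun hcon => hLn ?_
      have he : (fun z => ℓ wstar z) = fun z => ℓ (W ω) z - r (W ω) z := by
        funext z; rw [hr]; ring
      rw [he]
      exact hcon.sub hω
    have hgen2 : Integrable (fun ω => ∑ i, ℓ (W ω) (Z i ω)) P := by
      have hcong : (fun ω => (n : ℝ)⁻¹ * ∑ i, ℓ (W ω) (Z i ω))
          =ᵐ[P] fun ω => -((∫ z, ℓ (W ω) z ∂μ) - (n : ℝ)⁻¹ * ∑ i, ℓ (W ω) (Z i ω)) := by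
        filter_upwards [hae2] with ω h
        rw [h]; ring
      have h1 : Integrable (fun ω => (n : ℝ)⁻¹ * ∑ i, ℓ (W ω) (Z i ω)) P :=
        hgenInt.neg.congr hcong.symm
      have := h1.const_mul (n : ℝ)
      have he : (fun ω => (n : ℝ) * ((n : ℝ)⁻¹ * ∑ i, ℓ (W ω) (Z i ω)))
          = fun ω => ∑ i, ℓ (W ω) (Z i ω) := by
        funext ω; rw [← mul_assoc, mul_inv_cancel₀ hn0, one_mul]
      rwa [he] at this
    have hT : Integrable (fun ω => ∑ i, ℓ wstar (Z i ω)) P := by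
      have he : (fun ω => ∑ i, ℓ wstar (Z i ω))
          = fun ω => (∑ i, ℓ (W ω) (Z i ω)) - ∑ i, r (W ω) (Z i ω) := by
        funext ω
        rw [← Finset.sum_sub_distrib]
        congr 1
        funext i
        rw [hr]
        simp
      rw [he]
      exact hgen2.sub hSint
    -- independence argument
    set X : Fin n → Ω → ℝ := fun i ω => ℓ wstar (Z i ω) with hXdef
    have hXmeas : ∀ i, Measurable (X i) := fun i => hℓwmeas.comp (hZmeas i)
    have hXindep : iIndepFun X P :=
      hindep.comp (fun _ => ℓ wstar) (fun _ => hℓwmeas)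
    set i0 : Fin n := ⟨0, hn⟩ with hi0def
    set T : Ω → ℝ := fun ω => ∑ j ∈ Finset.univ.erase i0, X j ω with hTdef
    have hTmeas : Measurable T := by
      apply Finset.measurable_sum
      exact fun j _ => hXmeas j
    have hIndepTX : IndepFun (∑ j ∈ Finset.univ.erase i0, X j) (X i0) P :=
      hXindep.indepFun_finsetSum_of_notMem hXmeas (Finset.notMem_erase i0 _)
    have hTX : IndepFun T (X i0) P := by
      have : T = ∑ j ∈ Finset.univ.erase i0, X j := by
        funext ω; rw [hTdef]; simp [Finset.sum_apply]
      rwa [this]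
    have hmap : P.map (fun ω => (T ω, X i0 ω)) = (P.map T).prod (P.map (X i0)) :=
      (indepFun_iff_map_prod_eq_prod_map_map hTmeas.aemeasurable
        (hXmeas i0).aemeasurable).mp hTX
    haveI : IsProbabilityMeasure (P.map T) := Measure.isProbabilityMeasure_map hTmeas.aemeasurable
    haveI : IsProbabilityMeasure (P.map (X i0)) :=
      Measure.isProbabilityMeasure_map (hXmeas i0).aemeasurable
    have hsum_int : Integrable (fun ω => T ω + X i0 ω) P := by
      have he : (fun ω => T ω + X i0 ω) = fun ω => ∑ i, X i ω := by
        funext ω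
        simp only [hTdef]
        rw [add_comm]
        exact Finset.add_sum_erase Finset.univ (fun j => X j ω) (Finset.mem_univ i0)
      rw [he]
      exact hT
    have h1 : Integrable (fun q : ℝ × ℝ => q.1 + q.2) ((P.map T).prod (P.map (X i0))) := by
      rw [← hmap]
      rw [integrable_map_measure (show AEStronglyMeasurable (fun q : ℝ × ℝ => q.1 + q.2) _ from
          (measurable_fst.add measurable_snd).aestronglyMeasurable)
        (hTmeas.prodMk (hXmeas i0)).aemeasurable]
      exact hsum_int
    have h2 := h1.prod_right_ae
    haveI : (ae (P.map T)).NeBot := ae_neBot.mpr (IsProbabilityMeasure.ne_zero _)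
    obtain ⟨x0, hx0⟩ := h2.exists
    have h3 : Integrable (id : ℝ → ℝ) (P.map (X i0)) := by
      have h := hx0.sub (integrable_const x0)
      have he : ((fun y : ℝ => x0 + y) - fun _ : ℝ => x0) = (id : ℝ → ℝ) := by
        funext y; simp
      rwa [he] at h
    have h4 : Integrable (X i0) P :=
      (integrable_map_measure aestronglyMeasurable_id (hXmeas i0).aemeasurable).mp h3
    refine hLn ?_
    have h5 : Integrable (fun z => ℓ wstar z) (P.map (Z i0)) := by
      rw [integrable_map_measure hℓwmeas.aestronglyMeasurable (hZmeas i0).aemeasurable]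
      exact h4
    rwa [hZlaw i0] at h5
  -- per-i DV inequality
  have hkey : ∀ i : Fin n,
      Er - (∫ ω, r (W ω) (Z i ω) ∂P)
        ≤ (1 - c) / c * (∫ ω, r (W ω) (Z i ω) ∂P)
          + klDivR (P.map (fun ω => (W ω, Z i ω))) π / (η' * c) + ε / c := by
    intro i
    haveI := hprob i
    set μi : Measure (𝒲 × 𝒵) := P.map fun ω => (W ω, Z i ω) with hμidef
    have hRi_int : Integrable (fun p : 𝒲 × 𝒵 => r p.1 p.2) μi := by
      rw [hμidef, integrable_map_measure hRmeas.aestronglyMeasurable (hpair i).aemeasurable]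
      exact hri i
    have hf_int : Integrable (fun p : 𝒲 × 𝒵 => -η' * r p.1 p.2) μi :=
      hRi_int.const_mul _
    have hdv := dv_bound_s9 (hac i) hf_int (hexpInt η' hη'pos) (hllr i)
    have hRi_eq : ∫ p, r p.1 p.2 ∂μi = ∫ ω, r (W ω) (Z i ω) ∂P := by
      rw [hμidef, integral_map (hpair i).aemeasurable hRmeas.aestronglyMeasurable]
    set Ri : ℝ := ∫ ω, r (W ω) (Z i ω) ∂P with hRidef
    have hfint_eq : ∫ p, -η' * r p.1 p.2 ∂μi = -η' * Ri := by
      rw [integral_const_mul, hRi_eq]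
    rw [hfint_eq] at hdv
    have hKL : klDivR μi π = ∫ p, llr μi π p ∂μi := rfl
    have hdv2 : -η' * Ri ≤ klDivR μi π + η' * (-c * Er + ε) := by
      rw [hKL]
      exact le_trans hdv (by linarith [hψ])
    set K : ℝ := klDivR μi π with hKdef
    have hKnn : 0 ≤ K := by
      rw [hKdef, klDivR]
      exact gibbs_nonneg (hac i) (hllr i)
    have hexpand : (1 - c) / c * Ri + K / (η' * c) + ε / c - (Er - Ri)
        = (η' * Ri + K + η' * ε - η' * c * Er) / (η' * c) := by
      field_simp
      ring
    have hnum : 0 ≤ η' * Ri + K + η' * ε - η' * c * Er := by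
      have : η' * (-c * Er + ε) = -(η' * c * Er) + η' * ε := by ring
      rw [this] at hdv2
      linarith
    have : 0 ≤ (1 - c) / c * Ri + K / (η' * c) + ε / c - (Er - Ri) := by
      rw [hexpand]
      exact div_nonneg hnum (mul_pos hη'pos hc).le
    linarith
  -- the population term
  have hρint : Integrable (fun ω => ∫ z, r (W ω) z ∂μ) P := by
    have hF : Integrable (fun w => ∫ z, r w z ∂μ) (P.map W) := hrInt.integral_prod_left
    rw [integrable_map_measure hrInt.aestronglyMeasurable.integral_prod_right'
      hW.aemeasurable] at hF
    exact hF
  have hρeq : ∫ ω, ∫ z, r (W ω) z ∂μ ∂P = Er := by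
    rw [hErdef, hπdef, integral_prod _ hrInt,
      ← integral_map hW.aemeasurable hrInt.aestronglyMeasurable.integral_prod_right']
  -- ℓ wstar at data points
  have hLi : ∀ i : Fin n, Integrable (fun ω => ℓ wstar (Z i ω)) P := by
    intro i
    have := (integrable_map_measure hℓwmeas.aestronglyMeasurable
      (hZmeas i).aemeasurable).mp (by rwa [hZlaw i])
    exact this
  have hLieq : ∀ i : Fin n, ∫ ω, ℓ wstar (Z i ω) ∂P = ∫ z, ℓ wstar z ∂μ := by
    intro i
    rw [← hZlaw i, integral_map (hZmeas i).aemeasurable hℓwmeas.aestronglyMeasurable]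
  -- rewrite the generalization error
  have hae1 : ∀ᵐ ω ∂P, Integrable (fun z => r (W ω) z) μ :=
    ae_of_ae_map hW.aemeasurable hrInt.prod_right_ae
  have hgen_ae : (fun ω => (∫ z, ℓ (W ω) z ∂μ) - (n : ℝ)⁻¹ * ∑ i, ℓ (W ω) (Z i ω))
      =ᵐ[P] fun ω => ((∫ z, r (W ω) z ∂μ) - (n : ℝ)⁻¹ * ∑ i, r (W ω) (Z i ω))
        + ((∫ z, ℓ wstar z ∂μ) - (n : ℝ)⁻¹ * ∑ i, ℓ wstar (Z i ω)) := by
    filter_upwards [hae1] with ω hω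
    have hsplit : ∫ z, ℓ (W ω) z ∂μ = (∫ z, r (W ω) z ∂μ) + ∫ z, ℓ wstar z ∂μ := by
      have he : (fun z => ℓ (W ω) z) = fun z => r (W ω) z + ℓ wstar z := by
        funext z; rw [hr]; ring
      rw [he, integral_add hω hL]
    have hsum : ∑ i, ℓ (W ω) (Z i ω) = (∑ i, r (W ω) (Z i ω)) + ∑ i, ℓ wstar (Z i ω) := by
      rw [← Finset.sum_add_distrib]
      congr 1; funext i; rw [hr]; ring
    rw [hsplit, hsum]
    ring
  have hseq : ∫ ω, ((∫ z, ℓ (W ω) z ∂μ) - (n : ℝ)⁻¹ * ∑ i, ℓ (W ω) (Z i ω)) ∂P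
      = (n : ℝ)⁻¹ * ∑ i, (Er - ∫ ω, r (W ω) (Z i ω) ∂P) := by
    rw [integral_congr_ae hgen_ae]
    have hint1 : Integrable (fun ω => (n : ℝ)⁻¹ * ∑ i, r (W ω) (Z i ω)) P := hEmpInt
    have hint2 : Integrable (fun ω => (n : ℝ)⁻¹ * ∑ i, ℓ wstar (Z i ω)) P :=
      (integrable_finset_sum _ fun i _ => hLi i).const_mul _
    have hint3 : Integrable
        (fun ω => (∫ z, r (W ω) z ∂μ) - (n : ℝ)⁻¹ * ∑ i, r (W ω) (Z i ω)) P :=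
      hρint.sub hint1
    have hint4 : Integrable
        (fun ω => (∫ z, ℓ wstar z ∂μ) - (n : ℝ)⁻¹ * ∑ i, ℓ wstar (Z i ω)) P :=
      (integrable_const _).sub hint2
    rw [integral_add hint3 hint4, integral_sub hρint hint1,
      integral_sub (integrable_const _) hint2, hρeq, integral_const]
    rw [integral_const_mul, integral_const_mul,
      integral_finset_sum _ fun i _ => hri i, integral_finset_sum _ fun i _ => hLi i]
    have hs1 : ∑ i : Fin n, ∫ ω, ℓ wstar (Z i ω) ∂P = (n : ℝ) * ∫ z, ℓ wstar z ∂μ := by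
      rw [Finset.sum_congr rfl fun i _ => hLieq i, Finset.sum_const, Finset.card_univ,
        Fintype.card_fin, nsmul_eq_mul]
    rw [hs1, Finset.sum_sub_distrib, Finset.sum_const, Finset.card_univ, Fintype.card_fin,
      nsmul_eq_mul]
    simp only [measure_univ, probReal_univ, ENNReal.toReal_one, smul_eq_mul, one_mul]
    field_simp
    ring
  -- the empirical term
  have hempeq : ∫ ω, (n : ℝ)⁻¹ * ∑ i, r (W ω) (Z i ω) ∂P
      = (n : ℝ)⁻¹ * ∑ i, ∫ ω, r (W ω) (Z i ω) ∂P := by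
    rw [integral_const_mul, integral_finset_sum _ fun i _ => hri i]
  -- conclude
  rw [hseq, hempeq]
  have hsum_le : ∑ i, (Er - ∫ ω, r (W ω) (Z i ω) ∂P)
      ≤ ∑ i, ((1 - c) / c * (∫ ω, r (W ω) (Z i ω) ∂P)
          + (klDivR (P.map (fun ω => (W ω, Z i ω))) π / (η' * c) + ε / c)) := by
    refine Finset.sum_le_sum fun i _ => ?_
    have := hkey i
    linarith
  calc (n : ℝ)⁻¹ * ∑ i, (Er - ∫ ω, r (W ω) (Z i ω) ∂P)
      ≤ (n : ℝ)⁻¹ * ∑ i, ((1 - c) / c * (∫ ω, r (W ω) (Z i ω) ∂P)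
          + (klDivR (P.map (fun ω => (W ω, Z i ω))) π / (η' * c) + ε / c)) :=
        mul_le_mul_of_nonneg_left hsum_le (by positivity)
    _ = (1 - c) / c * ((n : ℝ)⁻¹ * ∑ i, ∫ ω, r (W ω) (Z i ω) ∂P)
          + (n : ℝ)⁻¹ * ∑ i,
            (klDivR (P.map (fun ω => (W ω, Z i ω))) π / (η' * c) + ε / c) := by
        rw [Finset.sum_add_distrib, mul_add, ← Finset.mul_sum]
        ring
end
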